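/- arXiv:math/0603224 — 3 statements merged into one kernel-verified Lean document; each statement's English description precedes it below -/
import Mathlib

section
/- C¹-stability of quadratic variation (deterministic version): let X : [0,T] → ℝ be continuous with finite quadratic variation [X,X] (the limit of C(ε,X,X)(t) exists uniformly in t and defines a continuous increasing function), and let f, g ∈ C¹(ℝ). Then the covariation [f(X), g(X)] exists and [f(X),g(X)]_t = ∫₀ᵗ f'(X_s) g'(X_s) d[X,X]_s. -/
open MeasureTheory Filter Set

/-- `f` is extended constantly outside `[0,T]`. -/
def ExtConst (T : ℝ) (f : ℝ → ℝ) : Prop :=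
  (∀ t ≤ (0:ℝ), f t = f 0) ∧ ∀ t, T ≤ t → f t = f T

/-- The `ε`-covariation `C(ε,U,V)(t)`. -/
noncomputable def Ccov (ε : ℝ) (U V : ℝ → ℝ) (t : ℝ) : ℝ :=
  ∫ s in (0:ℝ)..t, (U (s + ε) - U s) * (V (s + ε) - V s) / ε

lemma min_abs_sub (T s t : ℝ) : |min s T - min t T| ≤ |s - t| := by
  rcases le_total s T with h1 | h1 <;> rcases le_total t T with h2 | h2 <;>
    rw [abs_le] <;> simp only [min_eq_left, min_eq_right, h1, h2] <;>
    constructor <;> linarith [le_abs_self (s - t), neg_abs_le (s - t)]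

lemma clamp_abs_sub (T s t : ℝ) :
    |max 0 (min s T) - max 0 (min t T)| ≤ |s - t| := by
  calc |max 0 (min s T) - max 0 (min t T)| = |max (min s T) 0 - max (min t T) 0| := by
        rw [max_comm 0, max_comm 0]
    _ ≤ |min s T - min t T| := abs_max_sub_max_le_abs _ _ _
    _ ≤ |s - t| := min_abs_sub T s t

lemma clamp_mem (T : ℝ) (hT : 0 ≤ T) (s : ℝ) : max 0 (min s T) ∈ Icc 0 T :=
  ⟨le_max_left _ _, max_le hT (min_le_right _ _)⟩

lemma ext_eq_clamp {T : ℝ} (hT : 0 < T) {X : ℝ → ℝ} (hXe : ExtConst T X) (s : ℝ) :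
    X s = X (max 0 (min s T)) := by
  rcases le_or_gt s 0 with h | h
  · rw [min_eq_left (h.trans hT.le), max_eq_left h, hXe.1 s h]
  · rcases le_or_gt T s with h2 | h2
    · rw [min_eq_right h2, max_eq_right hT.le, hXe.2 s h2]
    · rw [min_eq_left h2.le, max_eq_right h.le]

/-- uniform continuity of the extended function -/
lemma ext_uc {T : ℝ} (hT : 0 < T) {X : ℝ → ℝ} (hXc : Continuous X) (hXe : ExtConst T X) :
    ∀ r > (0:ℝ), ∃ d > (0:ℝ), ∀ s t : ℝ, |s - t| < d → |X s - X t| < r := by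
  intro r hr
  have huc : UniformContinuousOn X (Icc 0 T) :=
    isCompact_Icc.uniformContinuousOn_of_continuous hXc.continuousOn
  rw [Metric.uniformContinuousOn_iff] at huc
  obtain ⟨d, hd, hduc⟩ := huc r hr
  refine ⟨d, hd, fun s t hst => ?_⟩
  rw [ext_eq_clamp hT hXe s, ext_eq_clamp hT hXe t]
  have := hduc _ (clamp_mem T hT.le s) _ (clamp_mem T hT.le t)
    (by rw [Real.dist_eq]; exact lt_of_le_of_lt (clamp_abs_sub T s t) hst)
  rwa [Real.dist_eq] at this

/-- boundedness of the extended function -/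
lemma ext_bdd {T : ℝ} (hT : 0 < T) {X : ℝ → ℝ} (hXc : Continuous X) (hXe : ExtConst T X) :
    ∃ M ≥ (0:ℝ), ∀ s, |X s| ≤ M := by
  obtain ⟨C, hC⟩ := isCompact_Icc.exists_bound_of_continuousOn (s := Icc (0:ℝ) T) hXc.continuousOn
  refine ⟨max C 0, le_max_right _ _, fun s => ?_⟩
  rw [ext_eq_clamp hT hXe s]
  exact le_trans (hC _ (clamp_mem T hT.le s)) (le_max_left _ _)

/-- Taylor-type remainder bound for C¹ functions. -/
lemma taylor_bound {f : ℝ → ℝ} (hf : ContDiff ℝ 1 f) (a b δ : ℝ)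
    (hosc : ∀ u ∈ Set.uIcc a b, |deriv f u - deriv f a| ≤ δ) :
    |f b - f a - deriv f a * (b - a)| ≤ δ * |b - a| := by
  have hdc : Continuous (deriv f) := hf.continuous_deriv le_rfl
  have h1 : ∫ u in a..b, deriv f u = f b - f a :=
    intervalIntegral.integral_deriv_eq_sub (fun x _ => (hf.differentiable one_ne_zero).differentiableAt)
      (hdc.intervalIntegrable a b)
  have h2 : ∫ _u in a..b, deriv f a = deriv f a * (b - a) := by
    simp [intervalIntegral.integral_const, mul_comm]
  have h3 : f b - f a - deriv f a * (b - a) = ∫ u in a..b, (deriv f u - deriv f a) := by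
    rw [intervalIntegral.integral_sub (hdc.intervalIntegrable a b)
      intervalIntegrable_const, h1, h2]
  rw [h3]
  have := intervalIntegral.norm_integral_le_of_norm_le_const (C := δ) (a := a) (b := b)
    (f := fun u => deriv f u - deriv f a)
    (fun x hx => by rw [Real.norm_eq_abs]; exact hosc x (Set.uIoc_subset_uIcc hx))
  rwa [Real.norm_eq_abs] at this

/-- algebraic bound for the product decomposition -/
lemma alg_bound (af bf ag bg d L δ : ℝ) (hL : 0 ≤ L) (hδ : 0 ≤ δ) (hδ1 : δ ≤ 1)
    (haf : |af| ≤ L) (hag : |ag| ≤ L)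
    (hbf : |bf| ≤ δ * |d|) (hbg : |bg| ≤ δ * |d|) :
    |(af * d + bf) * (ag * d + bg) - af * ag * (d * d)| ≤ (2*L+1) * δ * (d * d) := by
  have e : (af*d+bf)*(ag*d+bg) - af*ag*(d*d) = af*d*bg + bf*(ag*d) + bf*bg := by ring
  have habs : |d| * |d| = d * d := abs_mul_abs_self d
  have h1 : |af*d*bg| ≤ L * δ * (d*d) := by
    rw [abs_mul, abs_mul]
    calc |af| * |d| * |bg| ≤ L * |d| * (δ * |d|) := by
          apply mul_le_mul (mul_le_mul_of_nonneg_right haf (abs_nonneg d)) hbg (abs_nonneg _)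
          positivity
      _ = L * δ * (d*d) := by rw [← habs]; ring
  have h2 : |bf*(ag*d)| ≤ L * δ * (d*d) := by
    rw [abs_mul, abs_mul]
    calc |bf| * (|ag| * |d|) ≤ (δ * |d|) * (L * |d|) := by
          apply mul_le_mul hbf (mul_le_mul_of_nonneg_right hag (abs_nonneg d)) (by positivity)
            (by positivity)
      _ = L * δ * (d*d) := by rw [← habs]; ring
  have h3 : |bf*bg| ≤ δ * (d*d) := by
    rw [abs_mul]
    calc |bf| * |bg| ≤ (δ * |d|) * (δ * |d|) := mul_le_mul hbf hbg (abs_nonneg _) (by positivity)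
      _ = δ * δ * (d * d) := by rw [← habs]; ring
      _ ≤ 1 * δ * (d*d) := by
          nlinarith [mul_nonneg (mul_nonneg (sub_nonneg.mpr hδ1) hδ) (mul_self_nonneg d)]
      _ = δ * (d*d) := by ring
  calc |(af*d+bf)*(ag*d+bg) - af*ag*(d*d)| = |af*d*bg + bf*(ag*d) + bf*bg| := by rw [e]
    _ ≤ |af*d*bg + bf*(ag*d)| + |bf*bg| := abs_add_le _ _
    _ ≤ |af*d*bg| + |bf*(ag*d)| + |bf*bg| := by linarith [abs_add_le (af*d*bg) (bf*(ag*d))]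
    _ ≤ L*δ*(d*d) + L*δ*(d*d) + δ*(d*d) := by linarith
    _ = (2*L+1) * δ * (d*d) := by ring

set_option maxHeartbeats 2000000 in
/-- C¹-stability of quadratic variation: if `X` is continuous with
finite quadratic variation `[X,X]` (a continuous increasing function, realized as the
Stieltjes function `Q`) and `f, g ∈ C¹(ℝ)`, then `[f(X), g(X)]` exists and equals
`∫₀ᵗ f'(X_s) g'(X_s) d[X,X]_s`. -/
theorem stmt17 (T : ℝ) (hT : 0 < T) (X : ℝ → ℝ)
    (hXc : Continuous X) (hXe : ExtConst T X)
    (Q : StieltjesFunction ℝ) (hQc : Continuous Q) (hQ0 : Q 0 = 0)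
    (hQV : TendstoUniformlyOn (fun ε t => Ccov ε X X t) Q
      (nhdsWithin 0 (Set.Ioi 0)) (Set.Icc 0 T))
    (f g : ℝ → ℝ) (hf : ContDiff ℝ 1 f) (hg : ContDiff ℝ 1 g) :
    TendstoUniformlyOn (fun ε t => Ccov ε (fun s => f (X s)) (fun s => g (X s)) t)
      (fun t => ∫ s in Set.Ioc (0:ℝ) t, deriv f (X s) * deriv g (X s) ∂Q.measure)
      (nhdsWithin 0 (Set.Ioi 0)) (Set.Icc 0 T) := by
  have hQT0 : (0:ℝ) ≤ Q T := by rw [← hQ0]; exact Q.mono hT.le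
  set CQ : ℝ := Q T + 1 with hCQdef
  have hCQ : 0 < CQ := by rw [hCQdef]; linarith
  set h : ℝ → ℝ := fun s => deriv f (X s) * deriv g (X s) with hhdef
  have hf'c : Continuous (deriv f) := hf.continuous_deriv le_rfl
  have hg'c : Continuous (deriv g) := hg.continuous_deriv le_rfl
  have hhc : Continuous h := (hf'c.comp hXc).mul (hg'c.comp hXc)
  rw [Metric.tendstoUniformlyOn_iff]
  intro η hη
  -- bounds M, J, L
  obtain ⟨M, hM0, hM⟩ := ext_bdd hT hXc hXe
  set J : Set ℝ := Icc (-(M+1)) (M+1) with hJdef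
  have hJc : IsCompact J := isCompact_Icc
  have hXJ : ∀ s, X s ∈ J := by
    intro s
    obtain ⟨h1, h2⟩ := abs_le.mp (hM s)
    exact ⟨by linarith, by linarith⟩
  obtain ⟨L₀, hL₀⟩ := hJc.exists_bound_of_continuousOn hf'c.continuousOn
  obtain ⟨L₁, hL₁⟩ := hJc.exists_bound_of_continuousOn hg'c.continuousOn
  set L : ℝ := max 1 (max L₀ L₁) with hLdef
  have hL1 : 1 ≤ L := le_max_left _ _
  have hL0 : (0:ℝ) ≤ L := by linarith
  have hLf : ∀ u ∈ J, |deriv f u| ≤ L := fun u hu =>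
    le_trans (hL₀ u hu) (le_trans (le_max_left _ _) (le_max_right _ _))
  have hLg : ∀ u ∈ J, |deriv g u| ≤ L := fun u hu =>
    le_trans (hL₁ u hu) (le_trans (le_max_right _ _) (le_max_right _ _))
  have hhb : ∀ s, |h s| ≤ L * L := by
    intro s
    rw [hhdef]
    simp only
    rw [abs_mul]
    exact mul_le_mul (hLf _ (hXJ s)) (hLg _ (hXJ s)) (abs_nonneg _) hL0
  -- β, δ
  set β : ℝ := η / (8 * CQ) with hβdef
  have hβ : 0 < β := by rw [hβdef]; positivity
  set δ : ℝ := min 1 (η / (8 * (2*L+1) * CQ)) with hδdef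
  have hδpos : 0 < δ := lt_min one_pos (by positivity)
  have hδ1 : δ ≤ 1 := min_le_left _ _
  -- r from UC of f', g' on J
  obtain ⟨r, hr0, hr1, hrf, hrg⟩ :
      ∃ r, 0 < r ∧ r ≤ 1 ∧ (∀ u v, u ∈ J → v ∈ J → |u - v| ≤ r → |deriv f u - deriv f v| ≤ δ)
        ∧ (∀ u v, u ∈ J → v ∈ J → |u - v| ≤ r → |deriv g u - deriv g v| ≤ δ) := by
    have h1 := hJc.uniformContinuousOn_of_continuous hf'c.continuousOn
    have h2 := hJc.uniformContinuousOn_of_continuous hg'c.continuousOn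
    rw [Metric.uniformContinuousOn_iff] at h1 h2
    obtain ⟨r1, hr1p, hr1u⟩ := h1 δ hδpos
    obtain ⟨r2, hr2p, hr2u⟩ := h2 δ hδpos
    refine ⟨min 1 (min (r1/2) (r2/2)), by positivity, min_le_left _ _, ?_, ?_⟩
    · intro u v hu hv huv
      have hd : dist u v < r1 := by
        rw [Real.dist_eq]
        calc |u - v| ≤ min 1 (min (r1/2) (r2/2)) := huv
          _ ≤ r1/2 := le_trans (min_le_right _ _) (min_le_left _ _)
          _ < r1 := by linarith
      have := hr1u u hu v hv hd
      rw [Real.dist_eq] at this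
      exact this.le
    · intro u v hu hv huv
      have hd : dist u v < r2 := by
        rw [Real.dist_eq]
        calc |u - v| ≤ min 1 (min (r1/2) (r2/2)) := huv
          _ ≤ r2/2 := le_trans (min_le_right _ _) (min_le_right _ _)
          _ < r2 := by linarith
      have := hr2u u hu v hv hd
      rw [Real.dist_eq] at this
      exact this.le
  -- ρ for h
  obtain ⟨ρ, hρ0, hρ⟩ : ∃ ρ > (0:ℝ), ∀ s t : ℝ, |s - t| ≤ ρ → |h s - h t| ≤ β := by
    have hHc : Continuous (fun u => deriv f u * deriv g u) := hf'c.mul hg'c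
    have hH := hJc.uniformContinuousOn_of_continuous hHc.continuousOn
    rw [Metric.uniformContinuousOn_iff] at hH
    obtain ⟨r', hr'p, hr'⟩ := hH β hβ
    obtain ⟨d, hd, hduc⟩ := ext_uc hT hXc hXe r' hr'p
    refine ⟨d/2, by positivity, fun s t hst => ?_⟩
    have h1 : |X s - X t| < r' := hduc s t (by linarith)
    have := hr' (X s) (hXJ s) (X t) (hXJ t) (by rwa [Real.dist_eq])
    rw [Real.dist_eq] at this
    exact this.le
  -- n
  obtain ⟨n, hnn⟩ := exists_nat_gt (T / ρ)
  have hn0 : (0:ℝ) < n := lt_trans (by positivity) hnn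
  have hTn : T / n ≤ ρ := by
    rw [div_le_iff₀ hn0]
    rw [div_lt_iff₀ hρ0] at hnn
    linarith [mul_comm ρ (n:ℝ)]
  -- σ
  set σ : ℝ := min 1 (η / (8 * (n+1) * (L*L))) with hσdef
  have hσpos : 0 < σ := lt_min one_pos (by positivity)
  -- ε₀
  obtain ⟨ε₀, hε₀, hXosc⟩ : ∃ ε₀ > (0:ℝ), ∀ ε, 0 < ε → ε < ε₀ → ∀ s, |X (s + ε) - X s| ≤ r := by
    obtain ⟨d, hd, hduc⟩ := ext_uc hT hXc hXe r hr0
    exact ⟨d, hd, fun ε he1 he2 s =>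
      (hduc (s+ε) s (by rw [show s + ε - s = ε by ring, abs_of_pos he1]; exact he2)).le⟩
  -- eventual facts
  have hEv2 := (Metric.tendstoUniformlyOn_iff.mp hQV) σ hσpos
  have hEv1 : ∀ᶠ ε in nhdsWithin 0 (Ioi 0), ε ∈ Ioo (0:ℝ) ε₀ :=
    eventually_of_mem (Ioo_mem_nhdsGT_of_mem ⟨le_refl 0, hε₀⟩) (fun x hx => hx)
  filter_upwards [hEv1, hEv2] with ε hεmem hQnear
  obtain ⟨hε0, hεlt⟩ := hεmem
  intro t ht
  -- local functions
  set D : ℝ → ℝ := fun s => X (s + ε) - X s with hDdef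
  set w : ℝ → ℝ := fun s => D s * D s / ε with hwdef
  have hDc : Continuous D := (hXc.comp (continuous_id.add continuous_const)).sub hXc
  have hwc : Continuous w := (hDc.mul hDc).div_const ε
  have hw0 : ∀ s, 0 ≤ w s := fun s => div_nonneg (mul_self_nonneg _) hε0.le
  set A : ℝ → ℝ := fun s => f (X (s + ε)) - f (X s) with hAdef
  set B : ℝ → ℝ := fun s => g (X (s + ε)) - g (X s) with hBdef
  have hAc : Continuous A :=
    ((hf.continuous.comp (hXc.comp (continuous_id.add continuous_const)))).sub
      (hf.continuous.comp hXc)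
  have hBc : Continuous B :=
    ((hg.continuous.comp (hXc.comp (continuous_id.add continuous_const)))).sub
      (hg.continuous.comp hXc)
  have hABc : Continuous (fun s => A s * B s / ε) := (hAc.mul hBc).div_const ε
  -- Ccov identifications
  have hCX : ∀ x : ℝ, Ccov ε X X x = ∫ s in (0:ℝ)..x, w s := fun x => rfl
  have hCfg : Ccov ε (fun s => f (X s)) (fun s => g (X s)) t
      = ∫ s in (0:ℝ)..t, A s * B s / ε := rfl
  have hwint : ∀ a b : ℝ, IntervalIntegrable w volume a b := fun a b => hwc.intervalIntegrable a b
  have hCdiff : ∀ a b : ℝ, Ccov ε X X b - Ccov ε X X a = ∫ s in a..b, w s := by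
    intro a b
    rw [hCX, hCX,
      ← intervalIntegral.integral_add_adjacent_intervals (hwint 0 a) (hwint a b)]
    ring
  have hCmono : ∀ a b : ℝ, a ≤ b → Ccov ε X X a ≤ Ccov ε X X b := by
    intro a b hab
    have h0 : 0 ≤ ∫ s in a..b, w s :=
      intervalIntegral.integral_nonneg hab (fun u _ => hw0 u)
    linarith [hCdiff a b]
  have hCT : Ccov ε X X T ≤ CQ := by
    have h1 := hQnear T ⟨hT.le, le_refl T⟩
    rw [Real.dist_eq] at h1
    have h2 : σ ≤ 1 := min_le_left _ _
    obtain ⟨h3, h4⟩ := abs_lt.mp h1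
    rw [hCQdef]; linarith
  have hCt0 : 0 ≤ Ccov ε X X t := by
    have := hCmono 0 t ht.1
    have h0 : Ccov ε X X 0 = 0 := by rw [hCX]; simp
    linarith
  have hCtT : Ccov ε X X t ≤ Ccov ε X X T := hCmono t T ht.2
  -- pointwise Taylor bound
  have hptw : ∀ s : ℝ, |A s * B s / ε - h s * w s| ≤ (2*L+1) * δ * w s := by
    intro s
    have hDr : |D s| ≤ r := hXosc ε hε0 hεlt s
    have hmemJ : ∀ u ∈ uIcc (X s) (X (s+ε)), u ∈ J ∧ |u - X s| ≤ r := by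
      intro u hu
      have h1 : |u - X s| ≤ |X (s+ε) - X s| := abs_sub_left_of_mem_uIcc hu
      have h2 : |u - X s| ≤ r := le_trans h1 hDr
      constructor
      · have h3 : |u| ≤ M + 1 := by
          calc |u| = |X s + (u - X s)| := by ring_nf
            _ ≤ |X s| + |u - X s| := abs_add_le _ _
            _ ≤ M + r := add_le_add (hM s) h2
            _ ≤ M + 1 := by linarith
        exact ⟨(abs_le.mp h3).1, (abs_le.mp h3).2⟩
      · exact h2
    have hfu : ∀ u ∈ uIcc (X s) (X (s+ε)), |deriv f u - deriv f (X s)| ≤ δ :=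
      fun u hu => hrf u (X s) (hmemJ u hu).1 (hXJ s) (hmemJ u hu).2
    have hgu : ∀ u ∈ uIcc (X s) (X (s+ε)), |deriv g u - deriv g (X s)| ≤ δ :=
      fun u hu => hrg u (X s) (hmemJ u hu).1 (hXJ s) (hmemJ u hu).2
    have hRf := taylor_bound hf (X s) (X (s+ε)) δ hfu
    have hRg := taylor_bound hg (X s) (X (s+ε)) δ hgu
    have key := alg_bound (deriv f (X s)) (A s - deriv f (X s) * D s)
      (deriv g (X s)) (B s - deriv g (X s) * D s) (D s) L δ hL0 hδpos.le hδ1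
      (hLf _ (hXJ s)) (hLg _ (hXJ s))
      (by rw [hAdef, hDdef]; simpa [abs_sub_comm] using hRf)
      (by rw [hBdef, hDdef]; simpa [abs_sub_comm] using hRg)
    have e1 : deriv f (X s) * D s + (A s - deriv f (X s) * D s) = A s := by ring
    have e2 : deriv g (X s) * D s + (B s - deriv g (X s) * D s) = B s := by ring
    rw [e1, e2] at key
    -- key : |A s * B s - f'(X s) g'(X s) (D s * D s)| ≤ (2L+1) δ (D s * D s)
    have e3 : A s * B s / ε - h s * w s = (A s * B s - h s * (D s * D s)) / ε := by
      rw [hwdef]; simp only; ring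
    rw [e3, abs_div, abs_of_pos hε0]
    have e4 : (2*L+1) * δ * w s = ((2*L+1) * δ * (D s * D s)) / ε := by
      rw [hwdef]; simp only; ring
    rw [e4]
    have key2 : |A s * B s - h s * (D s * D s)| ≤ (2*L+1) * δ * (D s * D s) := by
      rw [hhdef]; simp only; exact key
    exact div_le_div_of_nonneg_right key2 hε0.le
  -- Term 1 : replacing the product increments by h * w
  have hT1 : |Ccov ε (fun s => f (X s)) (fun s => g (X s)) t - ∫ s in (0:ℝ)..t, h s * w s|
      ≤ η/8 := by
    have hABint : IntervalIntegrable (fun s => A s * B s / ε) volume 0 t :=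
      hABc.intervalIntegrable 0 t
    have hhwint : IntervalIntegrable (fun s => h s * w s) volume 0 t :=
      (hhc.mul hwc).intervalIntegrable 0 t
    have hδ2 : δ ≤ η / (8 * (2*L+1) * CQ) := min_le_right _ _
    calc |Ccov ε (fun s => f (X s)) (fun s => g (X s)) t - ∫ s in (0:ℝ)..t, h s * w s|
        = |∫ s in (0:ℝ)..t, (A s * B s / ε - h s * w s)| := by
          rw [hCfg, intervalIntegral.integral_sub hABint hhwint]
      _ ≤ ∫ s in (0:ℝ)..t, |A s * B s / ε - h s * w s| :=
          intervalIntegral.abs_integral_le_integral_abs ht.1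
      _ ≤ ∫ s in (0:ℝ)..t, (2*L+1) * δ * w s := by
          apply intervalIntegral.integral_mono_on ht.1
          · exact ((hABc.sub (hhc.mul hwc)).abs).intervalIntegrable 0 t
          · exact (continuous_const.mul hwc).intervalIntegrable 0 t
          · exact fun x _ => hptw x
      _ = (2*L+1) * δ * ∫ s in (0:ℝ)..t, w s := intervalIntegral.integral_const_mul _ _
      _ ≤ (2*L+1) * δ * CQ := by
          have h1 : (∫ s in (0:ℝ)..t, w s) = Ccov ε X X t := (hCX t).symm
          rw [h1]
          have : Ccov ε X X t ≤ CQ := le_trans hCtT hCT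
          apply mul_le_mul_of_nonneg_left this
          positivity
      _ ≤ η/8 := by
          have h2 : (2*L+1) * δ * CQ ≤ (2*L+1) * (η / (8 * (2*L+1) * CQ)) * CQ := by
            apply mul_le_mul_of_nonneg_right _ hCQ.le
            apply mul_le_mul_of_nonneg_left hδ2 (by linarith)
          have h3 : (2*L+1) * (η / (8 * (2*L+1) * CQ)) * CQ = η/8 := by
            field_simp
          linarith
  -- the partition
  set a : ℕ → ℝ := fun i => min t ((i : ℝ) * (T / n)) with hadef
  have hn0' : (n:ℝ) ≠ 0 := ne_of_gt hn0
  have ha0 : a 0 = 0 := by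
    rw [hadef]; simp [min_eq_right ht.1]
  have han : a n = t := by
    rw [hadef]; simp only
    rw [mul_div_cancel₀ T hn0']
    exact min_eq_left ht.2
  have hamono : ∀ i : ℕ, a i ≤ a (i+1) := by
    intro i
    apply min_le_min (le_refl t)
    apply mul_le_mul_of_nonneg_right _ (by positivity : (0:ℝ) ≤ T / n)
    push_cast
    linarith
  have hapos : ∀ i, 0 ≤ a i := fun i => le_min ht.1 (by positivity)
  have halet : ∀ i, a i ≤ t := fun i => min_le_left _ _
  have haIcc : ∀ i, a i ∈ Icc 0 T := fun i => ⟨hapos i, le_trans (halet i) ht.2⟩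
  have hstep : ∀ i : ℕ, a (i+1) - a i ≤ T / n := by
    intro i
    rcases le_total t ((i:ℝ) * (T/n)) with hc | hc
    · have h1 : a i = t := min_eq_left hc
      have h2 : a (i+1) ≤ t := min_le_left _ _
      have h3 : (0:ℝ) ≤ T / n := by positivity
      linarith
    · have h1 : a i = (i:ℝ)*(T/n) := min_eq_right hc
      have h2 : a (i+1) ≤ ((i:ℝ)+1)*(T/n) := by
        rw [hadef]; simp only; push_cast; exact min_le_right _ _
      rw [h1]; linarith
  -- splitting of both integrals
  have hsplit1 : ∫ s in (0:ℝ)..t, h s * w s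
      = ∑ i ∈ Finset.range n, ∫ s in a i..a (i+1), h s * w s := by
    have := intervalIntegral.sum_integral_adjacent_intervals (μ := volume) (a := a) (n := n)
      (fun k _ => (hhc.mul hwc).intervalIntegrable _ _)
    rw [ha0, han] at this
    exact this.symm
  have hsplit2 : ∫ s in (0:ℝ)..t, h s ∂Q.measure
      = ∑ i ∈ Finset.range n, ∫ s in a i..a (i+1), h s ∂Q.measure := by
    have := intervalIntegral.sum_integral_adjacent_intervals (μ := Q.measure) (a := a) (n := n)
      (fun k _ => hhc.intervalIntegrable _ _)
    rw [ha0, han] at this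
    exact this.symm
  have htarget : ∫ s in Ioc (0:ℝ) t, h s ∂Q.measure = ∫ s in (0:ℝ)..t, h s ∂Q.measure :=
    (intervalIntegral.integral_of_le ht.1).symm
  -- per-interval estimate
  have hper : ∀ i ∈ Finset.range n,
      |(∫ s in a i..a (i+1), h s * w s) - ∫ s in a i..a (i+1), h s ∂Q.measure|
        ≤ β * (Ccov ε X X (a (i+1)) - Ccov ε X X (a i)) + (L*L) * (2*σ)
          + β * (Q (a (i+1)) - Q (a i)) := by
    intro i _
    have hpq : a i ≤ a (i+1) := hamono i
    have hQpq : Q (a i) ≤ Q (a (i+1)) := Q.mono hpq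
    have hhnear : ∀ x ∈ Icc (a i) (a (i+1)), |h x - h (a i)| ≤ β := by
      intro x hx
      apply hρ
      rw [abs_of_nonneg (by linarith [hx.1] : (0:ℝ) ≤ x - a i)]
      have := hstep i
      have := hx.2
      linarith [hTn]
    -- decomposition of the Lebesgue part
    have d1 : ∫ s in a i..a (i+1), h s * w s
        = (∫ s in a i..a (i+1), (h s - h (a i)) * w s)
          + h (a i) * (Ccov ε X X (a (i+1)) - Ccov ε X X (a i)) := by
      rw [hCdiff, ← intervalIntegral.integral_const_mul, ← intervalIntegral.integral_add
        (f := fun s => (h s - h (a i)) * w s) (g := fun s => h (a i) * w s)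
        (((hhc.sub continuous_const).mul hwc).intervalIntegrable _ _)
        ((continuous_const.mul hwc).intervalIntegrable _ _)]
      congr 1
      ext s
      ring
    -- decomposition of the Stieltjes part
    have hc : ∫ _s in a i..a (i+1), (h (a i) : ℝ) ∂Q.measure
        = h (a i) * (Q (a (i+1)) - Q (a i)) := by
      rw [intervalIntegral.integral_const']
      rw [measureReal_def, measureReal_def, StieltjesFunction.measure_Ioc, StieltjesFunction.measure_Ioc]
      rw [ENNReal.toReal_ofReal (by linarith : (0:ℝ) ≤ Q (a (i+1)) - Q (a i))]
      rw [show ENNReal.ofReal (Q (a i) - Q (a (i+1))) = 0 from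
        ENNReal.ofReal_eq_zero.mpr (by linarith)]
      simp [smul_eq_mul, mul_comm]
    have d2 : ∫ s in a i..a (i+1), h s ∂Q.measure
        = (∫ s in a i..a (i+1), (h s - h (a i)) ∂Q.measure)
          + h (a i) * (Q (a (i+1)) - Q (a i)) := by
      have hsub := intervalIntegral.integral_sub (μ := Q.measure) (a := a i) (b := a (i+1))
        (f := h) (g := fun _ => h (a i))
        (hhc.intervalIntegrable _ _) intervalIntegrable_const
      rw [hc] at hsub
      rw [hsub]
      ring
    -- bound the three pieces
    have b1 : |∫ s in a i..a (i+1), (h s - h (a i)) * w s|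
        ≤ β * (Ccov ε X X (a (i+1)) - Ccov ε X X (a i)) := by
      rw [hCdiff]
      calc |∫ s in a i..a (i+1), (h s - h (a i)) * w s|
          ≤ ∫ s in a i..a (i+1), |(h s - h (a i)) * w s| :=
            intervalIntegral.abs_integral_le_integral_abs hpq
        _ ≤ ∫ s in a i..a (i+1), β * w s := by
            apply intervalIntegral.integral_mono_on hpq
            · exact (((hhc.sub continuous_const).mul hwc).abs).intervalIntegrable _ _
            · exact (continuous_const.mul hwc).intervalIntegrable _ _
            · intro x hx
              rw [abs_mul, abs_of_nonneg (hw0 x)]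
              exact mul_le_mul_of_nonneg_right (hhnear x hx) (hw0 x)
        _ = β * ∫ s in a i..a (i+1), w s := intervalIntegral.integral_const_mul _ _
    have b2 : |∫ s in a i..a (i+1), (h s - h (a i)) ∂Q.measure|
        ≤ β * (Q (a (i+1)) - Q (a i)) := by
      rw [intervalIntegral.integral_of_le hpq]
      have hfin : Q.measure (Ioc (a i) (a (i+1))) < ⊤ := by
        rw [StieltjesFunction.measure_Ioc]
        exact ENNReal.ofReal_lt_top
      have := norm_setIntegral_le_of_norm_le_const (μ := Q.measure) (s := Ioc (a i) (a (i+1)))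
        (C := β) (f := fun s => h s - h (a i)) hfin
        (fun x hx => by
          rw [Real.norm_eq_abs]
          exact hhnear x ⟨hx.1.le, hx.2⟩)
      rw [Real.norm_eq_abs] at this
      calc |∫ s in Ioc (a i) (a (i+1)), (h s - h (a i)) ∂Q.measure|
          ≤ β * (Q.measure (Ioc (a i) (a (i+1)))).toReal := this
        _ = β * (Q (a (i+1)) - Q (a i)) := by
            rw [StieltjesFunction.measure_Ioc, ENNReal.toReal_ofReal (by linarith)]
    have b3 : |h (a i) * ((Ccov ε X X (a (i+1)) - Ccov ε X X (a i))
        - (Q (a (i+1)) - Q (a i)))| ≤ (L*L) * (2*σ) := by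
      rw [abs_mul]
      have hd1 := hQnear (a i) (haIcc i)
      have hd2 := hQnear (a (i+1)) (haIcc (i+1))
      rw [Real.dist_eq] at hd1 hd2
      have hb : |(Ccov ε X X (a (i+1)) - Ccov ε X X (a i)) - (Q (a (i+1)) - Q (a i))| ≤ 2*σ := by
        obtain ⟨e1, e2⟩ := abs_lt.mp hd1
        obtain ⟨e3, e4⟩ := abs_lt.mp hd2
        rw [abs_le]
        constructor <;> linarith
      exact mul_le_mul (hhb _) hb (abs_nonneg _) (by nlinarith)
    calc |(∫ s in a i..a (i+1), h s * w s) - ∫ s in a i..a (i+1), h s ∂Q.measure|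
        = |(∫ s in a i..a (i+1), (h s - h (a i)) * w s)
            - (∫ s in a i..a (i+1), (h s - h (a i)) ∂Q.measure)
            + h (a i) * ((Ccov ε X X (a (i+1)) - Ccov ε X X (a i))
              - (Q (a (i+1)) - Q (a i)))| := by
          rw [d1, d2]; congr 1; ring
      _ ≤ |(∫ s in a i..a (i+1), (h s - h (a i)) * w s)
            - (∫ s in a i..a (i+1), (h s - h (a i)) ∂Q.measure)|
          + |h (a i) * ((Ccov ε X X (a (i+1)) - Ccov ε X X (a i))
              - (Q (a (i+1)) - Q (a i)))| := abs_add_le _ _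
      _ ≤ (|∫ s in a i..a (i+1), (h s - h (a i)) * w s|
            + |∫ s in a i..a (i+1), (h s - h (a i)) ∂Q.measure|)
          + |h (a i) * ((Ccov ε X X (a (i+1)) - Ccov ε X X (a i))
              - (Q (a (i+1)) - Q (a i)))| := by
          have := abs_sub (∫ s in a i..a (i+1), (h s - h (a i)) * w s)
            (∫ s in a i..a (i+1), (h s - h (a i)) ∂Q.measure)
          linarith
      _ ≤ β * (Ccov ε X X (a (i+1)) - Ccov ε X X (a i)) + (L*L) * (2*σ)
          + β * (Q (a (i+1)) - Q (a i)) := by linarith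
  -- summing up
  have hC0 : Ccov ε X X 0 = 0 := by rw [hCX]; simp
  have hsum1 : ∑ i ∈ Finset.range n, (Ccov ε X X (a (i+1)) - Ccov ε X X (a i))
      = Ccov ε X X t := by
    rw [Finset.sum_range_sub (fun i => Ccov ε X X (a i)), ha0, han, hC0, sub_zero]
  have hsum2 : ∑ i ∈ Finset.range n, (Q (a (i+1)) - Q (a i)) = Q t := by
    rw [Finset.sum_range_sub (fun i => Q (a i)), ha0, han, hQ0, sub_zero]
  have hQt : Q t ≤ CQ := by
    have := Q.mono ht.2
    rw [hCQdef]; linarith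
  have hT2 : |(∫ s in (0:ℝ)..t, h s * w s) - ∫ s in (0:ℝ)..t, h s ∂Q.measure|
      ≤ β * CQ + (n:ℝ) * ((L*L) * (2*σ)) + β * CQ := by
    rw [hsplit1, hsplit2, ← Finset.sum_sub_distrib]
    calc |∑ i ∈ Finset.range n, ((∫ s in a i..a (i+1), h s * w s)
            - ∫ s in a i..a (i+1), h s ∂Q.measure)|
        ≤ ∑ i ∈ Finset.range n, |(∫ s in a i..a (i+1), h s * w s)
            - ∫ s in a i..a (i+1), h s ∂Q.measure| := Finset.abs_sum_le_sum_abs _ _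
      _ ≤ ∑ i ∈ Finset.range n, (β * (Ccov ε X X (a (i+1)) - Ccov ε X X (a i))
            + (L*L) * (2*σ) + β * (Q (a (i+1)) - Q (a i))) := Finset.sum_le_sum hper
      _ = β * (Ccov ε X X t) + (n:ℝ) * ((L*L) * (2*σ)) + β * Q t := by
          rw [Finset.sum_add_distrib, Finset.sum_add_distrib, ← Finset.mul_sum, ← Finset.mul_sum,
            ← Finset.mul_sum]
          rw [hsum1, ← Finset.mul_sum, hsum2, Finset.sum_const, Finset.card_range]
          push_cast
          ring
      _ ≤ β * CQ + (n:ℝ) * ((L*L) * (2*σ)) + β * CQ := by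
          have h1 : Ccov ε X X t ≤ CQ := le_trans hCtT hCT
          have h2 := mul_le_mul_of_nonneg_left h1 hβ.le
          have h3 := mul_le_mul_of_nonneg_left hQt hβ.le
          linarith
  -- final numerology
  have hβCQ : β * CQ = η/8 := by
    rw [hβdef]
    field_simp
  have hσ2 : (n:ℝ) * ((L*L) * (2*σ)) ≤ η/4 := by
    have hσle : σ ≤ η / (8*((n:ℝ)+1)*(L*L)) := min_le_right _ _
    have hLL : (0:ℝ) < L*L := by nlinarith
    calc (n:ℝ) * ((L*L) * (2*σ)) ≤ (n:ℝ) * ((L*L) * (2 * (η / (8*((n:ℝ)+1)*(L*L))))) := by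
          apply mul_le_mul_of_nonneg_left _ hn0.le
          apply mul_le_mul_of_nonneg_left _ hLL.le
          linarith
      _ = η * ((n:ℝ) / (4*((n:ℝ)+1))) := by
          field_simp
          ring
      _ ≤ η/4 := by
          have hx : (n:ℝ)/(4*((n:ℝ)+1)) ≤ 1/4 := by
            rw [div_le_div_iff₀ (by positivity) (by norm_num)]
            linarith
          calc η * ((n:ℝ) / (4*((n:ℝ)+1))) ≤ η * (1/4) :=
                mul_le_mul_of_nonneg_left hx (le_of_lt hη)
            _ = η/4 := by ring
  -- conclusion
  rw [Real.dist_eq, htarget]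
  have hfinal : |(∫ s in (0:ℝ)..t, h s ∂Q.measure)
      - Ccov ε (fun s => f (X s)) (fun s => g (X s)) t|
      ≤ η/8 + (β * CQ + (n:ℝ) * ((L*L) * (2*σ)) + β * CQ) := by
    have e : (∫ s in (0:ℝ)..t, h s ∂Q.measure)
        - Ccov ε (fun s => f (X s)) (fun s => g (X s)) t
        = -((Ccov ε (fun s => f (X s)) (fun s => g (X s)) t - ∫ s in (0:ℝ)..t, h s * w s)
          + ((∫ s in (0:ℝ)..t, h s * w s) - ∫ s in (0:ℝ)..t, h s ∂Q.measure)) := by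
      ring
    rw [e, abs_neg]
    calc |(Ccov ε (fun s => f (X s)) (fun s => g (X s)) t - ∫ s in (0:ℝ)..t, h s * w s)
          + ((∫ s in (0:ℝ)..t, h s * w s) - ∫ s in (0:ℝ)..t, h s ∂Q.measure)|
        ≤ |Ccov ε (fun s => f (X s)) (fun s => g (X s)) t - ∫ s in (0:ℝ)..t, h s * w s|
          + |(∫ s in (0:ℝ)..t, h s * w s) - ∫ s in (0:ℝ)..t, h s ∂Q.measure| := abs_add_le _ _
      _ ≤ η/8 + (β * CQ + (n:ℝ) * ((L*L) * (2*σ)) + β * CQ) := add_le_add hT1 hT2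
  rw [hβCQ] at hfinal
  calc |(∫ s in (0:ℝ)..t, h s ∂Q.measure)
      - Ccov ε (fun s => f (X s)) (fun s => g (X s)) t|
      ≤ η/8 + (η/8 + (n:ℝ) * ((L*L) * (2*σ)) + η/8) := hfinal
    _ ≤ η/8 + (η/8 + η/4 + η/8) := by linarith
    _ < η := by linarith
end

section
/- Deterministic C² Itô formula via regularization: let X : [0,T] → ℝ be continuous with finite quadratic variation [X,X], and f ∈ C²(ℝ). Then the forward integral ∫₀ᵗ f'(X) d⁻X exists for all t and f(X_t) = f(X₀) + ∫₀ᵗ f'(X) d⁻X + (1/2)∫₀ᵗ f''(X_s) d[X,X]_s. -/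
open MeasureTheory Filter Set

lemma extconst_eq_comp_projIcc {T : ℝ} (hT : (0:ℝ) ≤ T) {f : ℝ → ℝ}
    (he : ExtConst T f) : f = (fun x : Set.Icc (0:ℝ) T => f x) ∘ Set.projIcc 0 T hT := by
  funext t
  simp only [Function.comp_apply]
  rcases le_total t 0 with h | h
  · rw [Set.projIcc_of_le_left _ h, he.1 t h]
  · rcases le_total T t with h' | h'
    · rw [Set.projIcc_of_right_le _ h', he.2 t h']
    · rw [Set.projIcc_of_mem _ ⟨h, h'⟩]

lemma uc_of_extconst {T : ℝ} (hT : (0:ℝ) ≤ T) {f : ℝ → ℝ}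
    (hc : Continuous f) (he : ExtConst T f) : UniformContinuous f := by
  rw [extconst_eq_comp_projIcc hT he]
  exact (CompactSpace.uniformContinuous_of_continuous (hc.comp continuous_subtype_val)).comp
    (LipschitzWith.projIcc hT).uniformContinuous

lemma bdd_of_extconst {T : ℝ} (hT : (0:ℝ) ≤ T) {f : ℝ → ℝ}
    (hc : Continuous f) (he : ExtConst T f) : ∃ M, 0 ≤ M ∧ ∀ t, |f t| ≤ M := by
  obtain ⟨M, hM⟩ := (isCompact_Icc (a := (0:ℝ)) (b := T)).exists_bound_of_continuousOn hc.continuousOn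
  refine ⟨M, le_trans (abs_nonneg _) (hM 0 ⟨le_refl _, hT⟩), fun t => ?_⟩
  rw [congrFun (extconst_eq_comp_projIcc hT he) t]
  exact hM _ (Set.projIcc 0 T hT t).2


-- identity: ∫₀ᵗ (g(s+ε) - g s) ds = ∫ₜ^{t+ε} g - ∫₀^ε g
lemma shift_integral_identity {g : ℝ → ℝ} (hg : Continuous g) (ε t : ℝ) :
    ∫ s in (0:ℝ)..t, (g (s + ε) - g s) = (∫ s in t..(t+ε), g s) - ∫ s in (0:ℝ)..ε, g s := by
  have hi : ∀ a b : ℝ, IntervalIntegrable g volume a b := fun a b => hg.intervalIntegrable a b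
  have h1 : ∫ s in (0:ℝ)..t, g (s + ε) = ∫ s in ε..(t+ε), g s := by
    simpa [zero_add] using intervalIntegral.integral_comp_add_right (a := (0:ℝ)) (b := t) g ε
  have hi2 : IntervalIntegrable (fun s => g (s + ε)) volume 0 t :=
    Continuous.intervalIntegrable (by continuity) _ _
  rw [intervalIntegral.integral_sub hi2 (hi _ _), h1]
  have e1 : (∫ s in ε..(t+ε), g s) = (∫ s in ε..(0:ℝ), g s) + ∫ s in (0:ℝ)..(t+ε), g s :=
    (intervalIntegral.integral_add_adjacent_intervals (hi _ _) (hi _ _)).symm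
  have e2 : (∫ s in (0:ℝ)..(t+ε), g s) = (∫ s in (0:ℝ)..t, g s) + ∫ s in t..(t+ε), g s :=
    (intervalIntegral.integral_add_adjacent_intervals (hi _ _) (hi _ _)).symm
  rw [e1, e2, intervalIntegral.integral_symm]
  ring

lemma L1 {T : ℝ} (hT : (0:ℝ) < T) {g : ℝ → ℝ} (hg : UniformContinuous g) :
    TendstoUniformlyOn (fun ε t => ∫ s in (0:ℝ)..t, (g (s + ε) - g s) / ε)
      (fun t => g t - g 0) (nhdsWithin 0 (Set.Ioi 0)) (Set.Icc 0 T) := by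
  rw [Metric.tendstoUniformlyOn_iff]
  intro δ hδ
  obtain ⟨η, hη, hmod⟩ := Metric.uniformContinuous_iff.mp hg (δ/4) (by linarith)
  filter_upwards [Ioo_mem_nhdsGT_of_mem ⟨le_refl (0:ℝ), hη⟩] with ε hε t _
  obtain ⟨hε0, hεη⟩ := hε
  have key : ∀ a : ℝ, |(∫ s in a..(a+ε), g s) - ε * g a| ≤ δ/4 * ε := by
    intro a
    have : (∫ s in a..(a+ε), g s) - ε * g a = ∫ s in a..(a+ε), (g s - g a) := by
      rw [intervalIntegral.integral_sub (hg.continuous.intervalIntegrable _ _)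
        (intervalIntegrable_const)]
      simp [mul_comm]
    rw [this]
    have := intervalIntegral.norm_integral_le_of_norm_le_const (C := δ/4)
      (f := fun s => g s - g a) (a := a) (b := a + ε) ?_
    · calc |∫ s in a..(a+ε), (g s - g a)| ≤ δ/4 * |a + ε - a| := this
        _ = δ/4 * ε := by rw [add_sub_cancel_left, abs_of_pos hε0]
    · intro x hx
      rw [Set.uIoc_of_le (by linarith)] at hx
      have : dist x a < η := by
        rw [Real.dist_eq, abs_of_pos (by linarith [hx.1])]
        linarith [hx.2]
      simpa [Real.norm_eq_abs, Real.dist_eq] using le_of_lt (hmod this)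
  have hint : (∫ s in (0:ℝ)..t, (g (s + ε) - g s) / ε)
      = ((∫ s in t..(t+ε), g s) - ∫ s in (0:ℝ)..ε, g s) / ε := by
    rw [intervalIntegral.integral_div, shift_integral_identity hg.continuous]
  rw [Real.dist_eq, hint]
  have h2 : (∫ s in (0:ℝ)..ε, g s) = ∫ s in (0:ℝ)..(0+ε), g s := by norm_num
  have k1 := key t
  have k2 := key 0
  rw [← h2] at k2
  have heq : g t - g 0 - ((∫ s in t..(t+ε), g s) - ∫ s in (0:ℝ)..ε, g s) / ε
      = (((ε * g t - ∫ s in t..(t+ε), g s)) - ((ε * g 0 - ∫ s in (0:ℝ)..ε, g s))) / ε := by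
    field_simp
    ring
  rw [heq, abs_div, abs_of_pos hε0]
  have h3 : |((ε * g t - ∫ s in t..(t+ε), g s)) - ((ε * g 0 - ∫ s in (0:ℝ)..ε, g s))|
      ≤ δ/4 * ε + δ/4 * ε := by
    refine le_trans (abs_sub _ _) ?_
    have k1' : |ε * g t - ∫ s in t..(t+ε), g s| ≤ δ/4 * ε := by rwa [abs_sub_comm] at k1
    have k2' : |ε * g 0 - ∫ s in (0:ℝ)..ε, g s| ≤ δ/4 * ε := by rwa [abs_sub_comm] at k2
    linarith
  calc |((ε * g t - ∫ s in t..(t+ε), g s)) - ((ε * g 0 - ∫ s in (0:ℝ)..ε, g s))| / ε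
      ≤ (δ/4 * ε + δ/4 * ε) / ε := by gcongr
    _ < δ := by rw [div_lt_iff₀ hε0]; nlinarith


lemma taylor2_bound {f : ℝ → ℝ} (hf : ContDiff ℝ 2 f) (a b M : ℝ)
    (hM : ∀ u ∈ Set.uIcc a b, |deriv (deriv f) u - deriv (deriv f) a| ≤ M) :
    |f b - f a - deriv f a * (b - a) - deriv (deriv f) a / 2 * (b - a)^2| ≤ M * (b - a)^2 := by
  have h2 : ContDiff ℝ (1+1 : ℕ∞) f := by
    have : ((1+1:ℕ∞) : WithTop ℕ∞) = 2 := by norm_num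
    rw [this]; exact_mod_cast hf
  have hs := (contDiff_succ_iff_deriv (n := 1)).mp (by exact_mod_cast h2)
  have hf' : Differentiable ℝ f := hs.1
  have hd : ContDiff ℝ 1 (deriv f) := hs.2.2
  have hf'' : Differentiable ℝ (deriv f) := hd.differentiable one_ne_zero
  -- step 1 : |deriv f x - deriv f a - f'' a * (x - a)| ≤ M * |x - a| on uIcc a b
  have step1 : ∀ x ∈ Set.uIcc a b, |deriv f x - deriv f a - deriv (deriv f) a * (x - a)| ≤ M * |x - a| := by
    intro x hx
    have key := Convex.norm_image_sub_le_of_norm_deriv_le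
      (f := fun u => deriv f u - deriv (deriv f) a * u) (s := Set.uIcc a b) (C := M)
      (fun u _ => (hf''.differentiableAt).sub ((differentiable_const _).mul differentiable_id).differentiableAt)
      ?_ (convex_uIcc a b) (Set.left_mem_uIcc) hx
    · have : (deriv f x - deriv (deriv f) a * x) - (deriv f a - deriv (deriv f) a * a)
          = deriv f x - deriv f a - deriv (deriv f) a * (x - a) := by ring
      rw [Real.norm_eq_abs, Real.norm_eq_abs, this] at key
      exact key
    · intro u hu
      have hda : HasDerivAt (fun u => deriv f u - deriv (deriv f) a * u)
          (deriv (deriv f) u - deriv (deriv f) a) u := by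
        have := ((hf'' u).hasDerivAt).sub ((hasDerivAt_id u).const_mul (deriv (deriv f) a))
        exact this.congr_deriv (by ring)
      rw [hda.deriv, Real.norm_eq_abs]
      exact hM u hu
  -- step 2 : bound g b where g x = f x - f a - f' a (x-a) - f'' a /2 (x-a)^2
  set c₁ := deriv f a
  set c₂ := deriv (deriv f) a
  have key := Convex.norm_image_sub_le_of_norm_deriv_le
    (f := fun x => f x - f a - c₁ * (x - a) - c₂ / 2 * (x - a)^2) (s := Set.uIcc a b)
    (C := M * |b - a|)
    (fun u _ => by fun_prop)
    ?_ (convex_uIcc a b) (Set.left_mem_uIcc) (Set.right_mem_uIcc)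
  · rw [Real.norm_eq_abs, Real.norm_eq_abs] at key
    have e1 : (f b - f a - c₁ * (b - a) - c₂ / 2 * (b - a)^2)
        - (f a - f a - c₁ * (a - a) - c₂ / 2 * (a - a)^2)
        = f b - f a - c₁ * (b - a) - c₂ / 2 * (b - a)^2 := by ring
    rw [e1] at key
    calc |f b - f a - c₁ * (b - a) - c₂ / 2 * (b - a)^2| ≤ M * |b - a| * |b - a| := key
      _ = M * (b-a)^2 := by rw [mul_assoc, ← abs_mul, ← sq, abs_sq]
  · intro u hu
    have hder : deriv (fun x => f x - f a - c₁ * (x - a) - c₂ / 2 * (x - a)^2) u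
        = deriv f u - c₁ - c₂ * (u - a) := by
      have h1 : HasDerivAt (fun x : ℝ => f x - f a - c₁ * (x - a) - c₂ / 2 * (x - a)^2)
          (deriv f u - c₁ * 1 - c₂ / 2 * (2 * (u - a) * 1)) u := by
        have hfu : HasDerivAt f (deriv f u) u := (hf'.differentiableAt).hasDerivAt
        have h1 : HasDerivAt (fun x : ℝ => x - a) 1 u := (hasDerivAt_id u).sub_const a
        have h2 : HasDerivAt (fun x : ℝ => (x - a)^2) (2 * (u - a) * 1) u := by
          exact (h1.pow 2).congr_deriv (by norm_num)
        exact (((hfu.sub_const (f a)).sub ((h1.const_mul c₁))).sub (h2.const_mul (c₂/2)))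
      have := h1.deriv
      rw [this]; ring
    rw [hder, Real.norm_eq_abs]
    have : deriv f u - c₁ - c₂ * (u - a) = deriv f u - deriv f a - c₂ * (u - a) := rfl
    calc |deriv f u - c₁ - c₂ * (u - a)| ≤ M * |u - a| := step1 u hu
      _ ≤ M * |b - a| := by
          have hM0 : 0 ≤ M := le_trans (abs_nonneg _) (hM a Set.left_mem_uIcc)
          apply mul_le_mul_of_nonneg_left _ hM0
          rw [abs_sub_le_iff]
          have e1 := le_abs_self (b - a)
          have e2 := neg_le_abs (b - a)
          have e3 := abs_nonneg (b - a)
          rcases Set.mem_uIcc.mp hu with ⟨h1, h2⟩ | ⟨h1, h2⟩ <;> constructor <;> linarith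


lemma L2 {T : ℝ} (hT : (0:ℝ) < T) (ρ : ℝ → ℝ → ℝ)
    (hρc : ∀ ε, 0 < ε → Continuous (ρ ε)) (hρ0 : ∀ ε, 0 < ε → ∀ s, 0 ≤ ρ ε s)
    (Q : StieltjesFunction ℝ) (hQ0 : Q 0 = 0)
    (hQV : TendstoUniformlyOn (fun ε t => ∫ s in (0:ℝ)..t, ρ ε s) Q
      (nhdsWithin 0 (Set.Ioi 0)) (Set.Icc 0 T))
    (h : ℝ → ℝ) (hh : UniformContinuous h) (M : ℝ) (hM0 : 0 ≤ M) (hM : ∀ s, |h s| ≤ M) :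
    TendstoUniformlyOn (fun ε t => ∫ s in (0:ℝ)..t, h s * ρ ε s)
      (fun t => ∫ s in Set.Ioc (0:ℝ) t, h s ∂Q.measure)
      (nhdsWithin 0 (Set.Ioi 0)) (Set.Icc 0 T) := by
  have hQmono := Q.mono
  have hQT0 : 0 ≤ Q T := hQ0 ▸ hQmono hT.le
  have hhc : Continuous h := hh.continuous
  -- integrability of h wrt Q.measure on any interval
  have hQint : ∀ p q : ℝ, IntervalIntegrable h Q.measure p q := by
    intro p q
    rw [intervalIntegrable_iff]
    apply Measure.integrableOn_of_bounded
    · rw [Set.uIoc, Q.measure_Ioc]; exact ENNReal.ofReal_ne_top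
    · exact hhc.aestronglyMeasurable
    · exact Eventually.of_forall fun s => by simpa [Real.norm_eq_abs] using hM s
  rw [Metric.tendstoUniformlyOn_iff]
  intro δ hδ
  set ω := δ / (8 * (Q T + 1)) with hω_def
  have hω : 0 < ω := by positivity
  obtain ⟨δ₁, hδ₁, hmod⟩ := Metric.uniformContinuous_iff.mp hh ω hω
  -- choose n
  obtain ⟨n, hn⟩ := exists_nat_gt (T / δ₁)
  have hn0 : 0 < n := by
    by_contra hc
    push_neg at hc
    interval_cases n
    · simp at hn; nlinarith [div_pos hT hδ₁]
  have hnR : 0 < (n:ℝ) := Nat.cast_pos.mpr hn0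
  have hTn : T / n < δ₁ := by
    rw [div_lt_iff₀ hnR]
    have := (div_lt_iff₀ hδ₁).mp hn
    linarith [this]
  have hTn0 : 0 < T / n := by positivity
  set a : ℕ → ℝ := fun i => i * (T / n) with ha_def
  have ha_mono : Monotone a := fun i j hij => by
    simp only [ha_def]
    exact mul_le_mul_of_nonneg_right (Nat.cast_le.mpr hij) hTn0.le
  have ha0 : a 0 = 0 := by simp [ha_def]
  have haN : a n = T := by simp only [ha_def]; exact mul_div_cancel₀ T hnR.ne'
  have ha_nonneg : ∀ i, 0 ≤ a i := fun i => ha0 ▸ ha_mono (Nat.zero_le i)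
  have ha_step : ∀ i : ℕ, a (i + 1) - a i = T / n := by
    intro i; simp only [ha_def]; push_cast; ring
  set δ₂ := δ / (4 * (n + 1) * (M + 1)) with hδ₂_def
  have hδ₂ : 0 < δ₂ := by positivity
  have hQV' := Metric.tendstoUniformlyOn_iff.mp hQV
  filter_upwards [hQV' 1 one_pos, hQV' δ₂ hδ₂, self_mem_nhdsWithin] with ε hev1 hev2 hε
  replace hε : 0 < ε := hε
  intro t ht
  set Cf : ℝ → ℝ := fun x => ∫ s in (0:ℝ)..x, ρ ε s with hCf_def
  have hρcont := hρc ε hε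
  have hρnn := hρ0 ε hε
  have hint : ∀ p q : ℝ, IntervalIntegrable (ρ ε) volume p q := fun p q =>
    hρcont.intervalIntegrable p q
  have hinthρ : ∀ p q : ℝ, IntervalIntegrable (fun s => h s * ρ ε s) volume p q := fun p q =>
    (hhc.mul hρcont).intervalIntegrable p q
  set b : ℕ → ℝ := fun i => min (a i) t with hb_def
  have hb_mono : Monotone b := fun i j hij => min_le_min (ha_mono hij) le_rfl
  have hb0 : b 0 = 0 := by simp [hb_def, ha0, ht.1]
  have hbN : b n = t := by simp [hb_def, haN, ht.2]
  have hb_mem : ∀ i, b i ∈ Set.Icc (0:ℝ) T := fun i =>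
    ⟨le_min (ha_nonneg i) ht.1, le_trans (min_le_right _ _) ht.2⟩
  have hCfdiff : ∀ i : ℕ, Cf (b (i+1)) - Cf (b i) = ∫ s in (b i)..(b (i+1)), ρ ε s := by
    intro i
    have := intervalIntegral.integral_add_adjacent_intervals (hint 0 (b i)) (hint (b i) (b (i+1)))
    simp only [hCf_def]
    linarith [this]
  have hCfnn : ∀ i : ℕ, 0 ≤ Cf (b (i+1)) - Cf (b i) := by
    intro i
    rw [hCfdiff i]
    exact intervalIntegral.integral_nonneg (hb_mono (Nat.le_succ i)) (fun s _ => hρnn s)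
  -- key modulus bound on nondegenerate subintervals
  have hmod' : ∀ i : ℕ, b i < b (i+1) → ∀ s ∈ Set.Ioc (b i) (b (i+1)), |h s - h (a i)| ≤ ω := by
    intro i hlt s hs
    have hait : a i ≤ t := by
      by_contra hc
      push_neg at hc
      have h1 : b i = t := min_eq_right hc.le
      have h2 : b (i+1) = t := min_eq_right (le_trans hc.le (ha_mono (Nat.le_succ i)))
      rw [h1, h2] at hlt; exact lt_irrefl _ hlt
    have hbi : b i = a i := min_eq_left hait
    have h1 : a i < s := hbi ▸ hs.1
    have h2 : s ≤ a (i+1) := le_trans hs.2 (min_le_left _ _)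
    have : dist s (a i) < δ₁ := by
      rw [Real.dist_eq, abs_of_pos (by linarith)]
      have := ha_step i
      linarith
    have := hmod this
    rw [Real.dist_eq] at this
    exact this.le
  -- per-term bound for the ρ side
  have perC : ∀ i : ℕ,
      |(∫ s in (b i)..(b (i+1)), h s * ρ ε s) - h (a i) * (Cf (b (i+1)) - Cf (b i))|
        ≤ ω * (Cf (b (i+1)) - Cf (b i)) := by
    intro i
    rcases eq_or_lt_of_le (hb_mono (Nat.le_succ i)) with heq | hlt
    · rw [← heq]
      simp [intervalIntegral.integral_same]
    · have hpq := (hb_mono (Nat.le_succ i))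
      rw [hCfdiff i, ← intervalIntegral.integral_const_mul]
      rw [← intervalIntegral.integral_sub (g := fun s => h (a i) * ρ ε s) (hinthρ _ _)
        ((continuous_const.mul hρcont).intervalIntegrable _ _)]
      have habs := intervalIntegral.abs_integral_le_integral_abs (μ := volume)
        (f := fun s => h s * ρ ε s - h (a i) * ρ ε s) hpq
      refine le_trans habs ?_
      have : ∫ s in (b i)..(b (i+1)), |h s * ρ ε s - h (a i) * ρ ε s|
          ≤ ∫ s in (b i)..(b (i+1)), ω * ρ ε s := by
        apply intervalIntegral.integral_mono_on hpq
        · exact ((hhc.mul hρcont).sub (continuous_const.mul hρcont)).abs.intervalIntegrable _ _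
        · exact (continuous_const.mul hρcont).intervalIntegrable _ _
        · intro s hs
          rcases eq_or_lt_of_le hs.1 with heq2 | hlt2
          · -- s = b i = a i (since nondegenerate)
            have hait : a i ≤ t := by
              by_contra hc
              push_neg at hc
              have h1 : b i = t := min_eq_right hc.le
              have h2 : b (i+1) = t := min_eq_right (le_trans hc.le (ha_mono (Nat.le_succ i)))
              rw [h1, h2] at hlt; exact lt_irrefl _ hlt
            have hbi : b i = a i := min_eq_left hait
            rw [← heq2, hbi]
            have : |h (a i) * ρ ε (a i) - h (a i) * ρ ε (a i)| = 0 := by simp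
            rw [this]
            exact mul_nonneg hω.le (hρnn _)
          · have hmem : s ∈ Set.Ioc (b i) (b (i+1)) := ⟨hlt2, hs.2⟩
            have := hmod' i hlt s hmem
            calc |h s * ρ ε s - h (a i) * ρ ε s| = |h s - h (a i)| * ρ ε s := by
                  rw [← sub_mul, abs_mul, abs_of_nonneg (hρnn s)]
              _ ≤ ω * ρ ε s := mul_le_mul_of_nonneg_right this (hρnn s)
      refine le_trans this ?_
      rw [intervalIntegral.integral_const_mul]
  -- per-term bound for the Q side
  have perQ : ∀ i : ℕ,
      |(∫ s in Set.Ioc (b i) (b (i+1)), h s ∂Q.measure) - h (a i) * (Q (b (i+1)) - Q (b i))|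
        ≤ ω * (Q (b (i+1)) - Q (b i)) := by
    intro i
    have hpq := hb_mono (Nat.le_succ i)
    have hμ : Q.measure (Set.Ioc (b i) (b (i+1))) = ENNReal.ofReal (Q (b (i+1)) - Q (b i)) :=
      Q.measure_Ioc _ _
    have hμfin : Q.measure (Set.Ioc (b i) (b (i+1))) < ⊤ := by rw [hμ]; exact ENNReal.ofReal_lt_top
    have htoReal : (Q.measure (Set.Ioc (b i) (b (i+1)))).toReal = Q (b (i+1)) - Q (b i) := by
      rw [hμ, ENNReal.toReal_ofReal (by linarith [hQmono hpq])]
    have hconst : ∫ _ in Set.Ioc (b i) (b (i+1)), h (a i) ∂Q.measure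
        = h (a i) * (Q (b (i+1)) - Q (b i)) := by
      rw [setIntegral_const, measureReal_def, htoReal, smul_eq_mul, mul_comm]
    rw [← hconst, ← integral_sub]
    · have key := norm_setIntegral_le_of_norm_le_const (μ := Q.measure)
        (s := Set.Ioc (b i) (b (i+1))) (C := ω) (f := fun s => h s - h (a i)) hμfin ?_
      · rw [Real.norm_eq_abs] at key
        rw [measureReal_def, htoReal] at key
        exact key
      · intro s hs
        rcases eq_or_lt_of_le hpq with heq | hlt
        · rw [← heq] at hs; simp at hs
        · simpa [Real.norm_eq_abs] using hmod' i hlt s hs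
    · exact (hQint (b i) (b (i+1))).1
    · exact integrableOn_const hμfin.ne
  -- splitting the integrals
  have hsplit1 : (∫ s in (0:ℝ)..t, h s * ρ ε s)
      = ∑ i ∈ Finset.range n, ∫ s in (b i)..(b (i+1)), h s * ρ ε s := by
    rw [intervalIntegral.sum_integral_adjacent_intervals (fun k _ => hinthρ _ _), hb0, hbN]
  have hsplit2 : (∫ s in Set.Ioc (0:ℝ) t, h s ∂Q.measure)
      = ∑ i ∈ Finset.range n, ∫ s in Set.Ioc (b i) (b (i+1)), h s ∂Q.measure := by
    have e1 : (∫ s in Set.Ioc (0:ℝ) t, h s ∂Q.measure) = ∫ s in (0:ℝ)..t, h s ∂Q.measure :=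
      (intervalIntegral.integral_of_le ht.1).symm
    rw [e1, ← hb0, ← hbN,
      ← intervalIntegral.sum_integral_adjacent_intervals (fun k _ => hQint _ _)]
    refine Finset.sum_congr rfl fun i _ => ?_
    exact intervalIntegral.integral_of_le (hb_mono (Nat.le_succ i))
  set SC := ∑ i ∈ Finset.range n, h (a i) * (Cf (b (i+1)) - Cf (b i)) with hSC_def
  set SQ := ∑ i ∈ Finset.range n, h (a i) * (Q (b (i+1)) - Q (b i)) with hSQ_def
  -- E1
  have hCf0 : Cf 0 = 0 := intervalIntegral.integral_same
  have hCfT_le : Cf t ≤ Q T + 1 := by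
    have h1 : Cf t ≤ Cf T := by
      have := intervalIntegral.integral_add_adjacent_intervals (hint 0 t) (hint t T)
      have h2 : 0 ≤ ∫ s in t..T, ρ ε s :=
        intervalIntegral.integral_nonneg ht.2 (fun s _ => hρnn s)
      simp only [hCf_def]
      linarith
    have h2 := hev1 T ⟨le_refl 0 |>.trans hT.le, le_refl T⟩
    rw [Real.dist_eq] at h2
    have := abs_lt.mp h2
    linarith [this.1, this.2, h1]
  have E1 : |(∑ i ∈ Finset.range n, ∫ s in (b i)..(b (i+1)), h s * ρ ε s) - SC|
      ≤ ω * (Q T + 1) := by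
    rw [hSC_def, ← Finset.sum_sub_distrib]
    refine le_trans (Finset.abs_sum_le_sum_abs _ _) ?_
    refine le_trans (Finset.sum_le_sum (fun i _ => perC i)) ?_
    rw [← Finset.mul_sum, Finset.sum_range_sub (fun i => Cf (b i)), hb0, hbN, hCf0, sub_zero]
    exact mul_le_mul_of_nonneg_left hCfT_le hω.le
  -- E2
  have E2 : |SQ - ∑ i ∈ Finset.range n, ∫ s in Set.Ioc (b i) (b (i+1)), h s ∂Q.measure|
      ≤ ω * Q T := by
    rw [hSQ_def, ← Finset.sum_sub_distrib]
    refine le_trans (Finset.abs_sum_le_sum_abs _ _) ?_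
    have hkey : ∀ i ∈ Finset.range n,
        |h (a i) * (Q (b (i+1)) - Q (b i)) - ∫ s in Set.Ioc (b i) (b (i+1)), h s ∂Q.measure|
          ≤ ω * (Q (b (i+1)) - Q (b i)) := by
      intro i _
      rw [abs_sub_comm]
      exact perQ i
    refine le_trans (Finset.sum_le_sum hkey) ?_
    rw [← Finset.mul_sum, Finset.sum_range_sub (fun i => Q (b i)), hb0, hbN, hQ0, sub_zero]
    exact mul_le_mul_of_nonneg_left (hQmono ht.2) hω.le
  -- E3
  have E3 : |SC - SQ| ≤ δ / 2 := by
    rw [hSC_def, hSQ_def, ← Finset.sum_sub_distrib]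
    refine le_trans (Finset.abs_sum_le_sum_abs _ _) ?_
    have key : ∀ i ∈ Finset.range n,
        |h (a i) * (Cf (b (i+1)) - Cf (b i)) - h (a i) * (Q (b (i+1)) - Q (b i))|
          ≤ M * (2 * δ₂) := by
      intro i _
      rw [← mul_sub, abs_mul]
      have h1 := hev2 (b (i+1)) (hb_mem (i+1))
      have h2 := hev2 (b i) (hb_mem i)
      rw [Real.dist_eq] at h1 h2
      have hb' : |Cf (b (i+1)) - Cf (b i) - (Q (b (i+1)) - Q (b i))|
          ≤ |Q (b (i+1)) - Cf (b (i+1))| + |Q (b i) - Cf (b i)| := by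
        have e : Cf (b (i+1)) - Cf (b i) - (Q (b (i+1)) - Q (b i))
            = -((Q (b (i+1)) - Cf (b (i+1))) - (Q (b i) - Cf (b i))) := by ring
        rw [e, abs_neg]
        exact abs_sub _ _
      refine mul_le_mul (hM _) (le_trans hb' (by linarith)) (abs_nonneg _) hM0
    refine le_trans (Finset.sum_le_sum key) ?_
    rw [Finset.sum_const, Finset.card_range, nsmul_eq_mul]
    have hδ₂eq : δ₂ = δ / (4 * ((n:ℝ) + 1) * (M + 1)) := hδ₂_def
    rw [hδ₂eq]
    have h4 : (0:ℝ) < 4 * ((n:ℝ) + 1) * (M + 1) := by positivity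
    rw [le_div_iff₀ (by norm_num : (0:ℝ) < 2)]
    have heq : (n:ℝ) * (M * (2 * (δ / (4 * ((n:ℝ) + 1) * (M + 1))))) * 2
        = δ * ((4*(n:ℝ)*M) / (4 * ((n:ℝ) + 1) * (M + 1))) := by
      field_simp
      ring
    rw [heq]
    have hle : (4*(n:ℝ)*M) / (4 * ((n:ℝ) + 1) * (M + 1)) ≤ 1 := by
      rw [div_le_one h4]
      nlinarith [hnR.le]
    exact mul_le_of_le_one_right hδ.le hle
  -- combine
  rw [Real.dist_eq]
  have hωQT1 : ω * (Q T + 1) = δ / 8 := by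
    rw [hω_def]
    field_simp
  have hωQT : ω * Q T ≤ δ / 8 := by
    rw [← hωQT1]
    have := mul_le_mul_of_nonneg_left (le_of_lt (lt_add_one (Q T))) hω.le
    linarith
  have total : |(∫ s in Set.Ioc (0:ℝ) t, h s ∂Q.measure) - ∫ s in (0:ℝ)..t, h s * ρ ε s|
      ≤ ω * Q T + δ / 2 + ω * (Q T + 1) := by
    rw [hsplit1, hsplit2]
    set S1 := ∑ i ∈ Finset.range n, ∫ s in (b i)..(b (i+1)), h s * ρ ε s with hS1
    set S2 := ∑ i ∈ Finset.range n, ∫ s in Set.Ioc (b i) (b (i+1)), h s ∂Q.measure with hS2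
    have hdecomp : S2 - S1 = (S2 - SQ) + (SQ - SC) + (SC - S1) := by ring
    rw [hdecomp]
    have t1 : |S2 - SQ| ≤ ω * Q T := by rw [abs_sub_comm]; exact E2
    have t2 : |SQ - SC| ≤ δ / 2 := by rw [abs_sub_comm]; exact E3
    have t3 : |SC - S1| ≤ ω * (Q T + 1) := by rw [abs_sub_comm]; exact E1
    calc |(S2 - SQ) + (SQ - SC) + (SC - S1)|
        ≤ |(S2 - SQ) + (SQ - SC)| + |SC - S1| := abs_add_le _ _
      _ ≤ |S2 - SQ| + |SQ - SC| + |SC - S1| := by linarith [abs_add_le (S2 - SQ) (SQ - SC)]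
      _ ≤ ω * Q T + δ / 2 + ω * (Q T + 1) := by linarith
  calc |(∫ s in Set.Ioc (0:ℝ) t, h s ∂Q.measure) - ∫ s in (0:ℝ)..t, h s * ρ ε s|
      ≤ ω * Q T + δ / 2 + ω * (Q T + 1) := total
    _ ≤ δ/8 + δ/2 + δ/8 := by linarith [hωQT, hωQT1.le]
    _ < δ := by linarith



lemma Eterm {T : ℝ} (hT : (0:ℝ) < T) (X : ℝ → ℝ) (hXc : Continuous X) (hXuc : UniformContinuous X)
    (B : ℝ) (hB0 : 0 ≤ B) (hB : ∀ t, |X t| ≤ B)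
    (f : ℝ → ℝ) (hf : ContDiff ℝ 2 f)
    (hf' : Differentiable ℝ f) (hf'c : Continuous (deriv f))
    (hf''c : Continuous (deriv (deriv f)))
    (Q : StieltjesFunction ℝ) (hQ0 : Q 0 = 0) (hQT0 : 0 ≤ Q T)
    (hQV : TendstoUniformlyOn
      (fun ε t => ∫ s in (0:ℝ)..t, (X (s + ε) - X s) * (X (s + ε) - X s) / ε) Q
      (nhdsWithin 0 (Set.Ioi 0)) (Set.Icc 0 T)) :
    TendstoUniformlyOn
      (fun ε t => ∫ s in (0:ℝ)..t,
        (f (X (s + ε)) - f (X s) - deriv f (X s) * (X (s + ε) - X s)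
          - deriv (deriv f) (X s) / 2 * (X (s + ε) - X s)^2) / ε)
      (fun _ => (0:ℝ)) (nhdsWithin 0 (Set.Ioi 0)) (Set.Icc 0 T) := by
  rw [Metric.tendstoUniformlyOn_iff]
  intro δ hδ
  set ω := δ / (2 * (Q T + 2)) with hω_def
  have hω : 0 < ω := by positivity
  -- uniform continuity of f'' on the compact [-B, B]
  have hucK : UniformContinuousOn (deriv (deriv f)) (Set.Icc (-B) B) :=
    (isCompact_Icc).uniformContinuousOn_of_continuous hf''c.continuousOn
  obtain ⟨δ₁, hδ₁, hmodK⟩ := Metric.uniformContinuousOn_iff.mp hucK ω hω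
  obtain ⟨δ₃, hδ₃, hmodX⟩ := Metric.uniformContinuous_iff.mp hXuc δ₁ hδ₁
  have hQV' := Metric.tendstoUniformlyOn_iff.mp hQV 1 one_pos
  filter_upwards [hQV', Ioo_mem_nhdsGT_of_mem (Set.left_mem_Ico.mpr hδ₃)] with ε hev hεm t ht
  obtain ⟨hε, hεδ₃⟩ := hεm
  set ρ : ℝ → ℝ := fun s => (X (s + ε) - X s) * (X (s + ε) - X s) / ε with hρ_def
  have hρc : Continuous ρ := by
    apply Continuous.div_const
    exact ((hXc.comp (continuous_id.add continuous_const)).sub hXc).mul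
      ((hXc.comp (continuous_id.add continuous_const)).sub hXc)
  have hρnn : ∀ s, 0 ≤ ρ s := fun s => div_nonneg (mul_self_nonneg _) hε.le
  -- pointwise remainder bound
  have hr : ∀ s : ℝ, |(f (X (s + ε)) - f (X s) - deriv f (X s) * (X (s + ε) - X s)
      - deriv (deriv f) (X s) / 2 * (X (s + ε) - X s)^2) / ε| ≤ ω * ρ s := by
    intro s
    have hΔ : |X (s + ε) - X s| < δ₁ := by
      have : dist (X (s + ε)) (X s) < δ₁ := hmodX (by
        rw [Real.dist_eq, add_sub_cancel_left, abs_of_pos hε]; exact hεδ₃)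
      rwa [Real.dist_eq] at this
    have hmem : ∀ u ∈ Set.uIcc (X s) (X (s + ε)), u ∈ Set.Icc (-B) B := by
      intro u hu
      have h1 : X s ∈ Set.Icc (-B) B := abs_le.mp (hB s) |>.imp id id |> fun h => ⟨h.1, h.2⟩
      have h2 : X (s + ε) ∈ Set.Icc (-B) B := by
        have := abs_le.mp (hB (s + ε)); exact ⟨this.1, this.2⟩
      exact Set.uIcc_subset_Icc h1 h2 hu
    have hMbd : ∀ u ∈ Set.uIcc (X s) (X (s + ε)),
        |deriv (deriv f) u - deriv (deriv f) (X s)| ≤ ω := by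
      intro u hu
      have hdist : dist u (X s) < δ₁ := by
        rw [Real.dist_eq]
        have e1 := le_abs_self (X (s + ε) - X s)
        have e2 := neg_le_abs (X (s + ε) - X s)
        have e3 := abs_nonneg (X (s + ε) - X s)
        have hle : |u - X s| ≤ |X (s + ε) - X s| := by
          rw [abs_sub_le_iff]
          rcases Set.mem_uIcc.mp hu with ⟨h1, h2⟩ | ⟨h1, h2⟩ <;> constructor <;> linarith
        exact lt_of_le_of_lt hle hΔ
      have hk := hmodK u (hmem u hu) (X s) (hmem _ Set.left_mem_uIcc) hdist
      rw [Real.dist_eq] at hk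
      exact hk.le
    have htay := taylor2_bound hf (X s) (X (s + ε)) ω hMbd
    rw [abs_div, abs_of_pos hε, div_le_iff₀ hε]
    calc |f (X (s + ε)) - f (X s) - deriv f (X s) * (X (s + ε) - X s)
          - deriv (deriv f) (X s) / 2 * (X (s + ε) - X s)^2|
        ≤ ω * (X (s + ε) - X s)^2 := htay
      _ = ω * ρ s * ε := by
          simp only [hρ_def]
          rw [mul_assoc, div_mul_cancel₀ _ (ne_of_gt hε), ← sq]
  -- integrate the bound
  have hrc : Continuous (fun s => (f (X (s + ε)) - f (X s) - deriv f (X s) * (X (s + ε) - X s)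
      - deriv (deriv f) (X s) / 2 * (X (s + ε) - X s)^2) / ε) := by
    apply Continuous.div_const
    have hXε : Continuous (fun s => X (s + ε)) := hXc.comp (continuous_id.add continuous_const)
    exact (((hf.continuous.comp hXε).sub (hf.continuous.comp hXc)).sub
      ((hf'c.comp hXc).mul (hXε.sub hXc))).sub
      (((hf''c.comp hXc).div_const 2).mul ((hXε.sub hXc).pow 2))
  have habs := intervalIntegral.abs_integral_le_integral_abs (μ := volume)
    (f := fun s => (f (X (s + ε)) - f (X s) - deriv f (X s) * (X (s + ε) - X s)
      - deriv (deriv f) (X s) / 2 * (X (s + ε) - X s)^2) / ε) ht.1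
  have hmono : (∫ s in (0:ℝ)..t, |(f (X (s + ε)) - f (X s) - deriv f (X s) * (X (s + ε) - X s)
      - deriv (deriv f) (X s) / 2 * (X (s + ε) - X s)^2) / ε|)
      ≤ ∫ s in (0:ℝ)..t, ω * ρ s := by
    apply intervalIntegral.integral_mono_on ht.1
    · exact hrc.abs.intervalIntegrable _ _
    · exact (continuous_const.mul hρc).intervalIntegrable _ _
    · exact fun s _ => hr s
  have hCt : (∫ s in (0:ℝ)..t, ρ s) ≤ Q T + 1 := by
    have h1 : (∫ s in (0:ℝ)..t, ρ s) ≤ ∫ s in (0:ℝ)..T, ρ s := by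
      have := intervalIntegral.integral_add_adjacent_intervals (μ := volume) (f := ρ)
        (hρc.intervalIntegrable 0 t) (hρc.intervalIntegrable t T)
      have h2 : 0 ≤ ∫ s in t..T, ρ s :=
        intervalIntegral.integral_nonneg ht.2 (fun s _ => hρnn s)
      linarith
    have h2 := hev T ⟨hT.le, le_refl T⟩
    rw [Real.dist_eq] at h2
    have := abs_lt.mp h2
    linarith [this.1]
  rw [Real.dist_eq, zero_sub, abs_neg]
  calc |∫ s in (0:ℝ)..t, (f (X (s + ε)) - f (X s) - deriv f (X s) * (X (s + ε) - X s)
        - deriv (deriv f) (X s) / 2 * (X (s + ε) - X s)^2) / ε|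
      ≤ ∫ s in (0:ℝ)..t, ω * ρ s := le_trans habs hmono
    _ = ω * ∫ s in (0:ℝ)..t, ρ s := intervalIntegral.integral_const_mul _ _
    _ ≤ ω * (Q T + 1) := mul_le_mul_of_nonneg_left hCt hω.le
    _ < δ := by
        rw [hω_def, div_mul_eq_mul_div, div_lt_iff₀ (by positivity)]
        nlinarith

/-- deterministic C² Itô formula: if `X` is continuous with finite
quadratic variation `[X,X]` (the continuous increasing Stieltjes function `Q`) and
`f ∈ C²(ℝ)`, then the forward integral `∫₀ᵗ f'(X) d⁻X` exists (uniformly in `t`) and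
`f(X_t) = f(X₀) + ∫₀ᵗ f'(X) d⁻X + ½ ∫₀ᵗ f''(X_s) d[X,X]_s`. -/
theorem stmt18 (T : ℝ) (hT : 0 < T) (X : ℝ → ℝ)
    (hXc : Continuous X) (hXe : ExtConst T X)
    (Q : StieltjesFunction ℝ) (hQc : Continuous Q) (hQ0 : Q 0 = 0)
    (hQV : TendstoUniformlyOn (fun ε t => Ccov ε X X t) Q
      (nhdsWithin 0 (Set.Ioi 0)) (Set.Icc 0 T))
    (f : ℝ → ℝ) (hf : ContDiff ℝ 2 f) :
    TendstoUniformlyOn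
      (fun ε t => ∫ s in (0:ℝ)..t, deriv f (X s) * (X (s + ε) - X s) / ε)
      (fun t => f (X t) - f (X 0) -
        (1 / 2) * ∫ s in Set.Ioc (0:ℝ) t, deriv (deriv f) (X s) ∂Q.measure)
      (nhdsWithin 0 (Set.Ioi 0)) (Set.Icc 0 T) := by
  have hT0 : (0:ℝ) ≤ T := hT.le
  have hXuc : UniformContinuous X := uc_of_extconst hT0 hXc hXe
  obtain ⟨B, hB0, hB⟩ := bdd_of_extconst hT0 hXc hXe
  have h2 : ContDiff ℝ (1+1 : ℕ∞) f := by
    have e : ((1+1:ℕ∞) : WithTop ℕ∞) = 2 := by norm_num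
    rw [e]; exact_mod_cast hf
  have hs := (contDiff_succ_iff_deriv (n := 1)).mp (by exact_mod_cast h2)
  have hf' : Differentiable ℝ f := hs.1
  have hd1 : ContDiff ℝ 1 (deriv f) := hs.2.2
  have hf'c : Continuous (deriv f) := hd1.continuous
  have hf''c : Continuous (deriv (deriv f)) := (contDiff_one_iff_deriv.mp hd1).2
  have hXe' : ∀ g : ℝ → ℝ, ExtConst T (fun s => g (X s)) := fun g =>
    ⟨fun t ht => by show g (X t) = g (X 0); rw [hXe.1 t ht],
     fun t ht => by show g (X t) = g (X T); rw [hXe.2 t ht]⟩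
  have hguc : UniformContinuous (fun s => f (X s)) :=
    uc_of_extconst hT0 (hf.continuous.comp hXc) (hXe' f)
  have hhuc0 : UniformContinuous (fun s => deriv (deriv f) (X s)) :=
    uc_of_extconst hT0 (hf''c.comp hXc) (hXe' (deriv (deriv f)))
  have hhuc : UniformContinuous (fun s => deriv (deriv f) (X s) / 2) := by
    have : (fun s => deriv (deriv f) (X s) / 2)
        = (fun x : ℝ => x / 2) ∘ (fun s => deriv (deriv f) (X s)) := rfl
    rw [this]
    exact (LipschitzWith.uniformContinuous
      (LipschitzWith.of_dist_le_mul (K := 1) (fun a b => by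
        simp only [Real.dist_eq, NNReal.coe_one, one_mul]
        have e : a / 2 - b / 2 = (a - b) / 2 := by ring
        rw [e, abs_div, abs_two]
        linarith [abs_nonneg (a - b)]))).comp hhuc0
  obtain ⟨M, hM0, hM⟩ := bdd_of_extconst hT0 (hf''c.comp hXc) (hXe' (deriv (deriv f)))
  set ρ : ℝ → ℝ → ℝ := fun ε s => (X (s + ε) - X s) * (X (s + ε) - X s) / ε with hρ_def
  have hρc : ∀ ε, 0 < ε → Continuous (ρ ε) := fun ε _ =>
    (((hXc.comp (continuous_id.add continuous_const)).sub hXc).mul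
      ((hXc.comp (continuous_id.add continuous_const)).sub hXc)).div_const ε
  have hρ0 : ∀ ε, 0 < ε → ∀ s, 0 ≤ ρ ε s := fun ε hε s =>
    div_nonneg (mul_self_nonneg _) hε.le
  have hQV' : TendstoUniformlyOn (fun ε t => ∫ s in (0:ℝ)..t, ρ ε s) Q
      (nhdsWithin 0 (Set.Ioi 0)) (Set.Icc 0 T) := hQV
  have l1 := L1 hT hguc
  have l2 := L2 hT ρ hρc hρ0 Q hQ0 hQV' (fun s => deriv (deriv f) (X s) / 2) hhuc
    (M/2) (by positivity) (fun s => by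
      rw [abs_div, abs_two]
      gcongr
      exact hM s)
  have le3 := Eterm hT X hXc hXuc B hB0 hB f hf hf' hf'c hf''c Q hQ0
    (hQ0 ▸ Q.mono hT0) hQV'
  refine (((l1.sub l2).sub le3).congr ?_).congr_right ?_
  · filter_upwards [self_mem_nhdsWithin] with ε hε
    intro t _
    replace hε : (0:ℝ) < ε := hε
    simp only [Pi.sub_apply]
    have hXε : Continuous (fun s => X (s + ε)) := hXc.comp (continuous_id.add continuous_const)
    have intA : IntervalIntegrable (fun s => (f (X (s + ε)) - f (X s)) / ε) volume 0 t :=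
      (((hf.continuous.comp hXε).sub (hf.continuous.comp hXc)).div_const ε).intervalIntegrable _ _
    have intB : IntervalIntegrable (fun s => deriv (deriv f) (X s) / 2 * ρ ε s) volume 0 t :=
      (((hf''c.comp hXc).div_const 2).mul (hρc ε hε)).intervalIntegrable _ _
    have intC : IntervalIntegrable (fun s => (f (X (s + ε)) - f (X s)
        - deriv f (X s) * (X (s + ε) - X s)
        - deriv (deriv f) (X s) / 2 * (X (s + ε) - X s)^2) / ε) volume 0 t := by
      apply Continuous.intervalIntegrable
      apply Continuous.div_const
      exact (((hf.continuous.comp hXε).sub (hf.continuous.comp hXc)).sub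
        ((hf'c.comp hXc).mul (hXε.sub hXc))).sub
        (((hf''c.comp hXc).div_const 2).mul ((hXε.sub hXc).pow 2))
    rw [← intervalIntegral.integral_sub intA intB,
      ← intervalIntegral.integral_sub (intA.sub intB) intC]
    apply intervalIntegral.integral_congr
    intro s _
    simp only [hρ_def]
    field_simp
    ring
  · intro t _
    simp only [Pi.sub_apply]
    rw [MeasureTheory.integral_div]
    ring
end

section
/- For a continuous function X : [0,T] → ℝ, the quadratic variation [X,X] exists (uniformly in t) if and only if the forward integral ∫₀^· X d⁻X exists (uniformly in t); in that case [X,X]_t = X(t)² − X(0)² − 2∫₀ᵗ X d⁻X. -/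
open MeasureTheory Filter Set

/-- The `ε`-forward integral `I⁻(ε,Y,dX)(t)`. -/
noncomputable def Iminus (ε : ℝ) (Y X : ℝ → ℝ) (t : ℝ) : ℝ :=
  ∫ s in (0:ℝ)..t, Y s * (X (s + ε) - X s) / ε

noncomputable def Gfn (X : ℝ → ℝ) (ε t : ℝ) : ℝ :=
  ((∫ s in t..(t+ε), X s ^ 2) - ∫ s in (0:ℝ)..ε, X s ^ 2) / ε

lemma ccov_eq (X : ℝ → ℝ) (hXc : Continuous X) (ε : ℝ) (hε : ε ≠ 0) (t : ℝ) :
    Ccov ε X X t = Gfn X ε t - 2 * Iminus ε X X t := by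
  have hXs : Continuous fun s => X (s + ε) := hXc.comp (continuous_id.add continuous_const)
  have hsq : Continuous fun s : ℝ => X s ^ 2 := hXc.pow 2
  have hint1 : IntervalIntegrable (fun s => (X (s+ε)^2 - X s^2)/ε) volume 0 t :=
    (((hXs.pow 2).sub hsq).div_const ε).intervalIntegrable 0 t
  have hint2 : IntervalIntegrable (fun s => 2 * (X s * (X (s+ε) - X s)/ε)) volume 0 t :=
    (continuous_const.mul ((hXc.mul (hXs.sub hXc)).div_const ε)).intervalIntegrable 0 t
  have h1 : Ccov ε X X t
      = (∫ s in (0:ℝ)..t, (X (s+ε)^2 - X s^2)/ε) - 2 * Iminus ε X X t := by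
    unfold Ccov Iminus
    rw [← intervalIntegral.integral_const_mul,
      ← intervalIntegral.integral_sub hint1 hint2]
    apply intervalIntegral.integral_congr
    intro s _
    field_simp
    ring
  have hA : (∫ s in (0:ℝ)..t, X (s+ε)^2) = ∫ s in ε..(t+ε), X s^2 := by
    simpa using intervalIntegral.integral_comp_add_right (a := (0:ℝ)) (b := t) (fun s => X s ^ 2) ε
  have hsub : (∫ s in (0:ℝ)..t, (X (s+ε)^2 - X s^2)/ε)
      = ((∫ s in (0:ℝ)..t, X (s+ε)^2) - ∫ s in (0:ℝ)..t, X s^2)/ε := by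
    rw [intervalIntegral.integral_div,
      intervalIntegral.integral_sub (f := fun s => X (s+ε)^2) (g := fun s => X s ^ 2) ((hXs.pow 2).intervalIntegrable 0 t)
        (hsq.intervalIntegrable 0 t)]
  have hadd : ∀ a b c : ℝ, (∫ s in a..b, X s^2) + ∫ s in b..c, X s^2 = ∫ s in a..c, X s^2 :=
    fun a b c => intervalIntegral.integral_add_adjacent_intervals
      (hsq.intervalIntegrable a b) (hsq.intervalIntegrable b c)
  have h2 := hadd 0 ε (t+ε)
  have h3 := hadd 0 t (t+ε)
  rw [h1, hsub, hA, Gfn]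
  have : (∫ s in ε..(t+ε), X s^2) - ∫ s in (0:ℝ)..t, X s^2
      = (∫ s in t..(t+ε), X s^2) - ∫ s in (0:ℝ)..ε, X s^2 := by linarith
  rw [this]

lemma G_tendsto (T : ℝ) (hT : 0 < T) (X : ℝ → ℝ) (hXc : Continuous X) :
    TendstoUniformlyOn (fun ε t => Gfn X ε t) (fun t => X t ^ 2 - X 0 ^ 2)
      (nhdsWithin 0 (Set.Ioi 0)) (Set.Icc 0 T) := by
  rw [Metric.tendstoUniformlyOn_iff]
  intro δ hδ
  have hsq : Continuous fun s : ℝ => X s ^ 2 := hXc.pow 2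
  have hK : IsCompact (Set.Icc (0:ℝ) (T+1)) := isCompact_Icc
  have hUC : UniformContinuousOn (fun s : ℝ => X s ^ 2) (Set.Icc (0:ℝ) (T+1)) :=
    hK.uniformContinuousOn_of_continuous hsq.continuousOn
  rw [Metric.uniformContinuousOn_iff] at hUC
  obtain ⟨η, hη, hηb⟩ := hUC (δ/3) (by linarith)
  have hmem : Set.Ioo (0:ℝ) (min η 1) ∈ nhdsWithin (0:ℝ) (Set.Ioi 0) :=
    Ioo_mem_nhdsGT_of_mem (by constructor <;> simp [lt_min hη one_pos])
  filter_upwards [hmem] with ε hε t ht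
  obtain ⟨hε0, hεm⟩ := hε
  have hεη : ε < η := lt_of_lt_of_le hεm (min_le_left _ _)
  have hε1 : ε ≤ 1 := le_of_lt (lt_of_lt_of_le hεm (min_le_right _ _))
  -- two local estimates
  have est : ∀ a : ℝ, 0 ≤ a → a ≤ T →
      |(∫ s in a..(a+ε), X s ^ 2) - ε * X a ^ 2| ≤ δ/3 * ε := by
    intro a ha haT
    have heq : (∫ s in a..(a+ε), X s ^ 2) - ε * X a ^ 2
        = ∫ s in a..(a+ε), (X s ^ 2 - X a ^ 2) := by
      rw [intervalIntegral.integral_sub (hsq.intervalIntegrable _ _)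
        (intervalIntegrable_const)]
      simp [intervalIntegral.integral_const]
    rw [heq]
    have hb : ∀ s ∈ Set.uIoc a (a+ε), ‖X s ^ 2 - X a ^ 2‖ ≤ δ/3 := by
      intro s hs
      rw [Set.uIoc_of_le (by linarith)] at hs
      have hs1 : a < s := hs.1
      have hs2 : s ≤ a + ε := hs.2
      have hsK : s ∈ Set.Icc (0:ℝ) (T+1) := ⟨by linarith, by linarith⟩
      have haK : a ∈ Set.Icc (0:ℝ) (T+1) := ⟨ha, by linarith⟩
      have hd : dist s a < η := by
        rw [Real.dist_eq, abs_of_pos (by linarith)]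
        linarith
      have := hηb s hsK a haK hd
      rw [Real.dist_eq] at this
      exact le_of_lt this
    have := intervalIntegral.norm_integral_le_of_norm_le_const hb
    rw [Real.norm_eq_abs] at this
    calc |∫ s in a..(a+ε), (X s ^ 2 - X a ^ 2)| ≤ δ/3 * |a + ε - a| := this
      _ = δ/3 * ε := by rw [show a + ε - a = ε by ring, abs_of_pos hε0]
  have e1 := est t ht.1 ht.2
  have e2 := est 0 le_rfl (le_of_lt hT)
  rw [zero_add] at e2
  rw [Real.dist_eq]
  have hGe : (X t ^ 2 - X 0 ^ 2) - Gfn X ε t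
      = -((((∫ s in t..(t+ε), X s ^ 2) - ε * X t ^ 2)
          - ((∫ s in (0:ℝ)..ε, X s ^ 2) - ε * X 0 ^ 2)) / ε) := by
    rw [Gfn]
    field_simp
    ring
  rw [hGe, abs_neg, abs_div, abs_of_pos hε0, div_lt_iff₀ hε0]
  have habs : |(((∫ s in t..(t+ε), X s ^ 2) - ε * X t ^ 2)
      - ((∫ s in (0:ℝ)..ε, X s ^ 2) - ε * X 0 ^ 2))|
      ≤ δ/3 * ε + δ/3 * ε := by
    calc _ ≤ |(∫ s in t..(t+ε), X s ^ 2) - ε * X t ^ 2|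
          + |(∫ s in (0:ℝ)..ε, X s ^ 2) - ε * X 0 ^ 2| := abs_sub _ _
      _ ≤ δ/3 * ε + δ/3 * ε := by exact add_le_add e1 e2
  nlinarith [habs]

lemma TUO.div_const {ι : Type*} {f : ι → ℝ → ℝ} {g : ℝ → ℝ} {p : Filter ι} {s : Set ℝ}
    (h : TendstoUniformlyOn f g p s) (c : ℝ) :
    TendstoUniformlyOn (fun n x => f n x / c) (fun x => g x / c) p s := by
  rcases eq_or_ne c 0 with rfl | hc
  · simp only [div_zero]
    intro u hu
    filter_upwards with n x _
    exact mem_uniformity_of_eq hu rfl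
  · rw [Metric.tendstoUniformlyOn_iff] at h ⊢
    intro δ hδ
    filter_upwards [h (δ * |c|) (mul_pos hδ (abs_pos.2 hc))] with n hn x hx
    have := hn x hx
    rw [Real.dist_eq] at this ⊢
    rw [div_sub_div_same, abs_div]
    rw [div_lt_iff₀ (abs_pos.2 hc)]
    exact this

lemma TUO.const_mul {ι : Type*} {f : ι → ℝ → ℝ} {g : ℝ → ℝ} {p : Filter ι} {s : Set ℝ}
    (h : TendstoUniformlyOn f g p s) (c : ℝ) :
    TendstoUniformlyOn (fun n x => c * f n x) (fun x => c * g x) p s := by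
  rcases eq_or_ne c 0 with rfl | hc
  · simp only [zero_mul]
    intro u hu
    filter_upwards with n x _
    exact mem_uniformity_of_eq hu rfl
  · have h2 := TUO.div_const h c⁻¹
    have e : ∀ x : ℝ, x / c⁻¹ = c * x := fun x => by field_simp
    simp only [e] at h2
    exact h2


/-- for continuous `X`, the quadratic variation `[X,X]` exists
(uniformly on `[0,T]`) iff the forward integral `∫₀^· X d⁻X` exists (uniformly),
and in that case `[X,X]_t = X(t)² − X(0)² − 2 ∫₀ᵗ X d⁻X`. -/
theorem stmt19 (T : ℝ) (hT : 0 < T) (X : ℝ → ℝ)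
    (hXc : Continuous X) (hXe : ExtConst T X) :
    ((∃ Q : ℝ → ℝ, TendstoUniformlyOn (fun ε t => Ccov ε X X t) Q
        (nhdsWithin 0 (Set.Ioi 0)) (Set.Icc 0 T)) ↔
      (∃ F : ℝ → ℝ, TendstoUniformlyOn (fun ε t => Iminus ε X X t) F
        (nhdsWithin 0 (Set.Ioi 0)) (Set.Icc 0 T))) ∧
    (∀ Q F : ℝ → ℝ,
      TendstoUniformlyOn (fun ε t => Ccov ε X X t) Q
        (nhdsWithin 0 (Set.Ioi 0)) (Set.Icc 0 T) →
      TendstoUniformlyOn (fun ε t => Iminus ε X X t) F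
        (nhdsWithin 0 (Set.Ioi 0)) (Set.Icc 0 T) →
      ∀ t ∈ Set.Icc (0:ℝ) T, Q t = X t ^ 2 - X 0 ^ 2 - 2 * F t) := by
  have hG := G_tendsto T hT X hXc
  have key : ∀ᶠ ε in nhdsWithin (0:ℝ) (Set.Ioi 0),
      ∀ t : ℝ, Ccov ε X X t = Gfn X ε t - 2 * Iminus ε X X t := by
    filter_upwards [self_mem_nhdsWithin] with ε hε t
    exact ccov_eq X hXc ε (ne_of_gt hε) t
  constructor
  · constructor
    · rintro ⟨Q, hQ⟩
      refine ⟨fun t => ((X t ^ 2 - X 0 ^ 2) - Q t) / 2, ?_⟩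
      have h2 := TUO.div_const (hG.sub hQ) 2
      exact h2.congr <| by
        filter_upwards [key] with ε hε t _
        have := hε t; simp only [Pi.sub_apply]; linarith
    · rintro ⟨F, hF⟩
      refine ⟨fun t => (X t ^ 2 - X 0 ^ 2) - 2 * F t, ?_⟩
      have h2 := hG.sub (TUO.const_mul hF 2)
      exact h2.congr <| by
        filter_upwards [key] with ε hε t _
        have := hε t; simp only [Pi.sub_apply]; linarith
  · intro Q F hQ hF t ht
    have hne : (nhdsWithin (0:ℝ) (Set.Ioi 0)).NeBot := nhdsGT_neBot 0
    have hQ' : Tendsto (fun ε => Ccov ε X X t) (nhdsWithin (0:ℝ) (Set.Ioi 0)) (nhds (Q t)) :=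
      hQ.tendsto_at ht
    have hlim : Tendsto (fun ε => Ccov ε X X t) (nhdsWithin (0:ℝ) (Set.Ioi 0))
        (nhds ((X t ^ 2 - X 0 ^ 2) - 2 * F t)) := by
      have h1 := (hG.tendsto_at ht).sub ((hF.tendsto_at ht).const_mul 2)
      refine h1.congr' ?_
      filter_upwards [key] with ε hε
      exact (hε t).symm
    exact tendsto_nhds_unique hQ' hlim
end
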